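/- arXiv:2209.02307 — 3 statements merged into one kernel-verified Lean document; each statement's English description precedes it below -/
import Mathlib

section
/- Over finite words, the languages definable in coSafetyFO (with exactly one free variable) are exactly the concatenations of FO-definable finite-word languages with all finite words: ⟦coSafetyFO⟧_fin = {L·(2^Σ)^* : L ∈ ⟦FO⟧_fin}. -/
namespace CoSafetyPaper

/-- LTL formulas in negation normal form over proposition letters `PL`. -/
inductive LTLF (PL : Type) : Type
  | pos : PL → LTLF PL                      -- p
  | nneg : PL → LTLF PL                     -- ¬p
  | disj : LTLF PL → LTLF PL → LTLF PL      -- φ ∨ ψ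
  | conj : LTLF PL → LTLF PL → LTLF PL      -- φ ∧ ψ
  | next : LTLF PL → LTLF PL                -- X φ
  | wnext : LTLF PL → LTLF PL               -- wX φ
  | untl : LTLF PL → LTLF PL → LTLF PL      -- φ U ψ
  | rel : LTLF PL → LTLF PL → LTLF PL       -- φ R ψ

/-- Satisfaction of an LTL formula by a word given as `σ : ℕ → Set PL`
together with a length `L : ℕ∞` (`⊤` for infinite words), at position `i`. -/
def Sat {PL : Type} (σ : ℕ → Set PL) (L : ℕ∞) : LTLF PL → ℕ → Prop
  | .pos p, i => p ∈ σ i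
  | .nneg p, i => p ∉ σ i
  | .disj φ ψ, i => Sat σ L φ i ∨ Sat σ L ψ i
  | .conj φ ψ, i => Sat σ L φ i ∧ Sat σ L ψ i
  | .next φ, i => ((i + 1 : ℕ) : ℕ∞) < L ∧ Sat σ L φ (i + 1)
  | .wnext φ, i => ((i + 1 : ℕ) : ℕ∞) = L ∨ Sat σ L φ (i + 1)
  | .untl φ ψ, i => ∃ j : ℕ, i ≤ j ∧ (j : ℕ∞) < L ∧ Sat σ L ψ j ∧
      ∀ k : ℕ, i ≤ k → k < j → Sat σ L φ k
  | .rel φ ψ, i =>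
      (∀ j : ℕ, i ≤ j → (j : ℕ∞) < L → Sat σ L ψ j) ∨
      (∃ k : ℕ, i ≤ k ∧ (k : ℕ∞) < L ∧ Sat σ L φ k ∧
        ∀ j : ℕ, i ≤ j → j ≤ k → Sat σ L ψ j)

/-- The function `ℕ → Set PL` associated with a finite word (a list of letters). -/
def wordOf {PL : Type} (xs : List (Set PL)) : ℕ → Set PL := fun n => xs.getD n ∅

/-- Satisfaction over a finite word. -/
def FinSat {PL : Type} (xs : List (Set PL)) (φ : LTLF PL) (i : ℕ) : Prop :=
  Sat (wordOf xs) (xs.length : ℕ∞) φ i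

/-- `L_fin(φ)`: the nonempty finite words satisfying `φ` (at position 0). -/
def LfinL {PL : Type} (φ : LTLF PL) : Set (List (Set PL)) :=
  {xs | xs ≠ [] ∧ FinSat xs φ 0}

/-- `L(φ)`: the infinite words satisfying `φ` (at position 0). -/
def LinfL {PL : Type} (φ : LTLF PL) : Set (ℕ → Set PL) :=
  {σ | Sat σ ⊤ φ 0}

/-- `L·(2^Σ)^*` : concatenation of a language of finite words with all finite words. -/
def catFin {PL : Type} (Lg : Set (List (Set PL))) : Set (List (Set PL)) :=
  {w | ∃ u ∈ Lg, ∃ v : List (Set PL), w = u ++ v}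

/-- Concatenation of a finite word with an infinite word. -/
def listConc {PL : Type} (u : List (Set PL)) (v : ℕ → Set PL) : ℕ → Set PL :=
  fun n => if n < u.length then wordOf u n else v (n - u.length)

/-- `L·(2^Σ)^ω` : concatenation of a language of finite words with all infinite words. -/
def catInf {PL : Type} (Lg : Set (List (Set PL))) : Set (ℕ → Set PL) :=
  {w | ∃ u ∈ Lg, ∃ v : ℕ → Set PL, w = listConc u v}

/-- The prefix `σ_[0,i]` of an infinite word, as a list. -/
def prefixList {PL : Type} (σ : ℕ → Set PL) (i : ℕ) : List (Set PL) :=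
  (List.range (i + 1)).map σ

/-- co-safety ω-languages. -/
def IsCoSafetyLang {PL : Type} (Lg : Set (ℕ → Set PL)) : Prop :=
  ∀ σ ∈ Lg, ∃ i : ℕ, ∀ σ' : ℕ → Set PL, listConc (prefixList σ i) σ' ∈ Lg

/-- safety ω-languages. -/
def IsSafetyLang {PL : Type} (Lg : Set (ℕ → Set PL)) : Prop :=
  ∀ σ : ℕ → Set PL, σ ∉ Lg → ∃ i : ℕ, ∀ σ' : ℕ → Set PL, listConc (prefixList σ i) σ' ∉ Lg

/-- co-safety languages of finite words. -/
def IsCoSafetyLangFin {PL : Type} (Lg : Set (List (Set PL))) : Prop :=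
  (∀ σ ∈ Lg, σ ≠ []) ∧
  ∀ σ ∈ Lg, ∃ i < σ.length, ∀ σ' : List (Set PL), σ.take (i + 1) ++ σ' ∈ Lg

/-- safety languages of finite words. -/
def IsSafetyLangFin {PL : Type} (Lg : Set (List (Set PL))) : Prop :=
  (∀ σ ∈ Lg, σ ≠ []) ∧
  ∀ σ : List (Set PL), σ ≠ [] → σ ∉ Lg →
    ∃ i < σ.length, ∀ σ' : List (Set PL), σ.take (i + 1) ++ σ' ∉ Lg

/-- coSafetyLTL: only X, wX and U as temporal operators. -/
inductive CoSafetyLTL {PL : Type} : LTLF PL → Prop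
  | pos (p : PL) : CoSafetyLTL (.pos p)
  | nneg (p : PL) : CoSafetyLTL (.nneg p)
  | disj {φ ψ : LTLF PL} : CoSafetyLTL φ → CoSafetyLTL ψ → CoSafetyLTL (.disj φ ψ)
  | conj {φ ψ : LTLF PL} : CoSafetyLTL φ → CoSafetyLTL ψ → CoSafetyLTL (.conj φ ψ)
  | next {φ : LTLF PL} : CoSafetyLTL φ → CoSafetyLTL (.next φ)
  | wnext {φ : LTLF PL} : CoSafetyLTL φ → CoSafetyLTL (.wnext φ)
  | untl {φ ψ : LTLF PL} : CoSafetyLTL φ → CoSafetyLTL ψ → CoSafetyLTL (.untl φ ψ)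

/-- coSafetyLTL without the weak tomorrow operator: only X and U. -/
inductive CoSafetyLTLnoW {PL : Type} : LTLF PL → Prop
  | pos (p : PL) : CoSafetyLTLnoW (.pos p)
  | nneg (p : PL) : CoSafetyLTLnoW (.nneg p)
  | disj {φ ψ : LTLF PL} : CoSafetyLTLnoW φ → CoSafetyLTLnoW ψ → CoSafetyLTLnoW (.disj φ ψ)
  | conj {φ ψ : LTLF PL} : CoSafetyLTLnoW φ → CoSafetyLTLnoW ψ → CoSafetyLTLnoW (.conj φ ψ)
  | next {φ : LTLF PL} : CoSafetyLTLnoW φ → CoSafetyLTLnoW (.next φ)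
  | untl {φ ψ : LTLF PL} : CoSafetyLTLnoW φ → CoSafetyLTLnoW ψ → CoSafetyLTLnoW (.untl φ ψ)

/-- SafetyLTL: only X, wX and R as temporal operators. -/
inductive SafetyLTL {PL : Type} : LTLF PL → Prop
  | pos (p : PL) : SafetyLTL (.pos p)
  | nneg (p : PL) : SafetyLTL (.nneg p)
  | disj {φ ψ : LTLF PL} : SafetyLTL φ → SafetyLTL ψ → SafetyLTL (.disj φ ψ)
  | conj {φ ψ : LTLF PL} : SafetyLTL φ → SafetyLTL ψ → SafetyLTL (.conj φ ψ)
  | next {φ : LTLF PL} : SafetyLTL φ → SafetyLTL (.next φ)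
  | wnext {φ : LTLF PL} : SafetyLTL φ → SafetyLTL (.wnext φ)
  | rel {φ ψ : LTLF PL} : SafetyLTL φ → SafetyLTL ψ → SafetyLTL (.rel φ ψ)

/-- SafetyLTL without the tomorrow operator: only wX and R. -/
inductive SafetyLTLnoX {PL : Type} : LTLF PL → Prop
  | pos (p : PL) : SafetyLTLnoX (.pos p)
  | nneg (p : PL) : SafetyLTLnoX (.nneg p)
  | disj {φ ψ : LTLF PL} : SafetyLTLnoX φ → SafetyLTLnoX ψ → SafetyLTLnoX (.disj φ ψ)
  | conj {φ ψ : LTLF PL} : SafetyLTLnoX φ → SafetyLTLnoX ψ → SafetyLTLnoX (.conj φ ψ)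
  | wnext {φ : LTLF PL} : SafetyLTLnoX φ → SafetyLTLnoX (.wnext φ)
  | rel {φ ψ : LTLF PL} : SafetyLTLnoX φ → SafetyLTLnoX ψ → SafetyLTLnoX (.rel φ ψ)

/-- First-order formulas over words: signature `<`, `=`, and a unary predicate
for each proposition letter; variables are natural numbers. -/
inductive FOW (PL : Type) : Type
  | lt : ℕ → ℕ → FOW PL
  | eq : ℕ → ℕ → FOW PL
  | pred : PL → ℕ → FOW PL
  | not : FOW PL → FOW PL
  | disj : FOW PL → FOW PL → FOW PL
  | conj : FOW PL → FOW PL → FOW PL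
  | ex : ℕ → FOW PL → FOW PL
  | all : ℕ → FOW PL → FOW PL

/-- First-order satisfaction over a word `σ` with length `L : ℕ∞` (`⊤` for
infinite words) under a valuation `v` of the variables into positions. -/
def FOSat {PL : Type} (σ : ℕ → Set PL) (L : ℕ∞) : FOW PL → (ℕ → ℕ) → Prop
  | .lt x y, v => v x < v y
  | .eq x y, v => v x = v y
  | .pred p x, v => p ∈ σ (v x)
  | .not φ, v => ¬ FOSat σ L φ v
  | .disj φ ψ, v => FOSat σ L φ v ∨ FOSat σ L ψ v
  | .conj φ ψ, v => FOSat σ L φ v ∧ FOSat σ L ψ v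
  | .ex x φ, v => ∃ n : ℕ, (n : ℕ∞) < L ∧ FOSat σ L φ (Function.update v x n)
  | .all x φ, v => ∀ n : ℕ, (n : ℕ∞) < L → FOSat σ L φ (Function.update v x n)

/-- Free variables of a first-order formula. -/
def FOW.free {PL : Type} : FOW PL → Finset ℕ
  | .lt x y => {x, y}
  | .eq x y => {x, y}
  | .pred _ x => {x}
  | .not φ => φ.free
  | .disj φ ψ => φ.free ∪ ψ.free
  | .conj φ ψ => φ.free ∪ ψ.free
  | .ex x φ => φ.free.erase x
  | .all x φ => φ.free.erase x

/-- `φ → ψ` as an abbreviation. -/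
def FOW.impl {PL : Type} (φ ψ : FOW PL) : FOW PL := .disj (.not φ) ψ

/-- `y ≤ x` as an abbreviation. -/
def FOW.le {PL : Type} (y x : ℕ) : FOW PL := .disj (.lt y x) (.eq y x)

/-- The coSafetyFO fragment:
`φ ::= x<y | x=y | x≠y | P(x) | ¬P(x) | φ∨φ | φ∧φ | ∃y(x<y ∧ φ) | ∀y(x<y<z → φ)`. -/
inductive CoSafetyFO {PL : Type} : FOW PL → Prop
  | lt (x y : ℕ) : CoSafetyFO (.lt x y)
  | eq (x y : ℕ) : CoSafetyFO (.eq x y)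
  | ne (x y : ℕ) : CoSafetyFO (.not (.eq x y))
  | pred (p : PL) (x : ℕ) : CoSafetyFO (.pred p x)
  | npred (p : PL) (x : ℕ) : CoSafetyFO (.not (.pred p x))
  | disj {φ ψ : FOW PL} : CoSafetyFO φ → CoSafetyFO ψ → CoSafetyFO (.disj φ ψ)
  | conj {φ ψ : FOW PL} : CoSafetyFO φ → CoSafetyFO ψ → CoSafetyFO (.conj φ ψ)
  | ex (x y : ℕ) {φ : FOW PL} : CoSafetyFO φ →
      CoSafetyFO (.ex y (.conj (.lt x y) φ))
  | all (x y z : ℕ) {φ : FOW PL} : CoSafetyFO φ →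
      CoSafetyFO (.all y (FOW.impl (.conj (.lt x y) (.lt y z)) φ))

/-- The SafetyFO fragment:
`φ ::= x<y | x=y | x≠y | P(x) | ¬P(x) | φ∨φ | φ∧φ | ∃y(x<y<z ∧ φ) | ∀y(x<y → φ)`. -/
inductive SafetyFO {PL : Type} : FOW PL → Prop
  | lt (x y : ℕ) : SafetyFO (.lt x y)
  | eq (x y : ℕ) : SafetyFO (.eq x y)
  | ne (x y : ℕ) : SafetyFO (.not (.eq x y))
  | pred (p : PL) (x : ℕ) : SafetyFO (.pred p x)
  | npred (p : PL) (x : ℕ) : SafetyFO (.not (.pred p x))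
  | disj {φ ψ : FOW PL} : SafetyFO φ → SafetyFO ψ → SafetyFO (.disj φ ψ)
  | conj {φ ψ : FOW PL} : SafetyFO φ → SafetyFO ψ → SafetyFO (.conj φ ψ)
  | ex (x y z : ℕ) {φ : FOW PL} : SafetyFO φ →
      SafetyFO (.ex y (.conj (.conj (.lt x y) (.lt y z)) φ))
  | all (x y : ℕ) {φ : FOW PL} : SafetyFO φ →
      SafetyFO (.all y (FOW.impl (.lt x y) φ))

/-- A formula has exactly one free variable. -/
def HasOneFree {PL : Type} (φ : FOW PL) : Prop := ∃ x : ℕ, φ.free = {x}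

/-- `L_fin(φ(x))` for a first-order formula with (exactly one) free variable:
nonempty finite words that satisfy it with the free variable interpreted as `0`. -/
def LfinFO {PL : Type} (φ : FOW PL) : Set (List (Set PL)) :=
  {xs | xs ≠ [] ∧ FOSat (wordOf xs) (xs.length : ℕ∞) φ (fun _ => 0)}

/-- `L(φ(x))` for a first-order formula with (exactly one) free variable:
infinite words that satisfy it with the free variable interpreted as `0`. -/
def LinfFO {PL : Type} (φ : FOW PL) : Set (ℕ → Set PL) :=
  {σ | FOSat σ ⊤ φ (fun _ => 0)}

/-- `⟦coSafetyFO⟧_fin`. -/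
def CoSafetyFOFin (PL : Type) : Set (Set (List (Set PL))) :=
  {Lg | ∃ φ : FOW PL, CoSafetyFO φ ∧ HasOneFree φ ∧ Lg = LfinFO φ}

/-- `⟦coSafetyFO⟧`. -/
def CoSafetyFOInf (PL : Type) : Set (Set (ℕ → Set PL)) :=
  {Lg | ∃ φ : FOW PL, CoSafetyFO φ ∧ HasOneFree φ ∧ Lg = LinfFO φ}

/-- `⟦SafetyFO⟧_fin`. -/
def SafetyFOFin (PL : Type) : Set (Set (List (Set PL))) :=
  {Lg | ∃ φ : FOW PL, SafetyFO φ ∧ HasOneFree φ ∧ Lg = LfinFO φ}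

/-- `⟦FO⟧_fin` (formulas with exactly one free variable). -/
def FOFin (PL : Type) : Set (Set (List (Set PL))) :=
  {Lg | ∃ φ : FOW PL, HasOneFree φ ∧ Lg = LfinFO φ}

/-- `⟦coSafetyLTL⟧_fin`. -/
def CoSafetyLTLFin (PL : Type) : Set (Set (List (Set PL))) :=
  {Lg | ∃ φ : LTLF PL, CoSafetyLTL φ ∧ Lg = LfinL φ}

/-- `⟦coSafetyLTL\{wX}⟧_fin`. -/
def CoSafetyLTLnoWFin (PL : Type) : Set (Set (List (Set PL))) :=
  {Lg | ∃ φ : LTLF PL, CoSafetyLTLnoW φ ∧ Lg = LfinL φ}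

/-- `⟦SafetyLTL⟧_fin`. -/
def SafetyLTLFin (PL : Type) : Set (Set (List (Set PL))) :=
  {Lg | ∃ φ : LTLF PL, SafetyLTL φ ∧ Lg = LfinL φ}

/-- `⟦SafetyLTL\{X}⟧_fin`. -/
def SafetyLTLnoXFin (PL : Type) : Set (Set (List (Set PL))) :=
  {Lg | ∃ φ : LTLF PL, SafetyLTLnoX φ ∧ Lg = LfinL φ}

/-- `⟦LTL⟧_fin`. -/
def LTLFin (PL : Type) : Set (Set (List (Set PL))) :=
  {Lg | ∃ φ : LTLF PL, Lg = LfinL φ}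

/-- `⟦LTL⟧`. -/
def LTLInf (PL : Type) : Set (Set (ℕ → Set PL)) :=
  {Lg | ∃ φ : LTLF PL, Lg = LinfL φ}

/-- `⟦coSafetyLTL⟧`. -/
def CoSafetyLTLInf (PL : Type) : Set (Set (ℕ → Set PL)) :=
  {Lg | ∃ φ : LTLF PL, CoSafetyLTL φ ∧ Lg = LinfL φ}

/-- `⟦SafetyLTL⟧`. -/
def SafetyLTLInf (PL : Type) : Set (Set (ℕ → Set PL)) :=
  {Lg | ∃ φ : LTLF PL, SafetyLTL φ ∧ Lg = LinfL φ}

/-- Quantifier-free first-order formulas in one (implicit) variable, i.e.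
boolean combinations of the atoms `P(x)`, `x=x`, `x<x`. -/
inductive QF (PL : Type) : Type
  | tru : QF PL
  | fls : QF PL
  | pos : PL → QF PL
  | qnot : QF PL → QF PL
  | qor : QF PL → QF PL → QF PL
  | qand : QF PL → QF PL → QF PL

/-- Evaluation of a quantifier-free one-variable formula at a letter. -/
def QF.sat {PL : Type} (s : Set PL) : QF PL → Prop
  | .tru => True
  | .fls => False
  | .pos p => p ∈ s
  | .qnot φ => ¬ QF.sat s φ
  | .qor φ ψ => QF.sat s φ ∨ QF.sat s ψ
  | .qand φ ψ => QF.sat s φ ∧ QF.sat s ψ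

/-- An ∃-formula with free variables `z₀,…,z_m`:
`∃x₀…∃x_n (x₀<⋯<x_n ∧ z₀=x₀ ∧ ⋀ z_k=x_{i_k} ∧ ⋀ α_j(x_j) ∧ ⋀ ∀y(x_{j−1}<y<x_j → β_j(y)))`. -/
structure ExForm (PL : Type) (m : ℕ) where
  n : ℕ
  bind : Fin m → Fin (n + 1)
  alpha : Fin (n + 1) → QF PL
  beta : Fin n → QF PL

/-- Satisfaction of an ∃-formula on the word `σ` of length `L` (`⊤` if infinite),
where `z : Fin (m+1) → ℕ` interprets the free variables `z₀,…,z_m`. -/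
def ExForm.ESat {PL : Type} {m : ℕ} (e : ExForm PL m) (σ : ℕ → Set PL) (L : ℕ∞)
    (z : Fin (m + 1) → ℕ) : Prop :=
  ∃ x : Fin (e.n + 1) → ℕ,
    StrictMono x ∧
    (∀ j : Fin (e.n + 1), ((x j : ℕ) : ℕ∞) < L) ∧
    z 0 = x 0 ∧
    (∀ k : Fin m, z k.succ = x (e.bind k)) ∧
    (∀ j : Fin (e.n + 1), (e.alpha j).sat (σ (x j))) ∧
    (∀ j : Fin e.n, ∀ y : ℕ, x j.castSucc < y → y < x j.succ → (e.beta j).sat (σ y))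

/-- Satisfaction of a disjunction of ∃-formulas. -/
def DisjESat {PL : Type} {m : ℕ} (ds : List (ExForm PL m)) (σ : ℕ → Set PL) (L : ℕ∞)
    (z : Fin (m + 1) → ℕ) : Prop :=
  ∃ e ∈ ds, ExForm.ESat e σ L z

/-- Size (number of symbols) of an LTL formula. -/
def LTLF.size {PL : Type} : LTLF PL → ℕ
  | .pos _ => 1
  | .nneg _ => 2
  | .disj φ ψ => φ.size + ψ.size + 1
  | .conj φ ψ => φ.size + ψ.size + 1
  | .next φ => φ.size + 1
  | .wnext φ => φ.size + 1
  | .untl φ ψ => φ.size + ψ.size + 1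
  | .rel φ ψ => φ.size + ψ.size + 1

/-- Size (number of symbols) of a first-order formula. -/
def FOW.size {PL : Type} : FOW PL → ℕ
  | .lt _ _ => 3
  | .eq _ _ => 3
  | .pred _ _ => 2
  | .not φ => φ.size + 1
  | .disj φ ψ => φ.size + ψ.size + 1
  | .conj φ ψ => φ.size + ψ.size + 1
  | .ex _ φ => φ.size + 2
  | .all _ φ => φ.size + 2

/-- Bounded formulas relative to a variable `x`: every quantifier is of the form
`∃y(y ≤ x ∧ …)` or `∀y(y ≤ x → …)`. -/
inductive BoundedBy {PL : Type} (x : ℕ) : FOW PL → Prop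
  | lt (a b : ℕ) : BoundedBy x (.lt a b)
  | eq (a b : ℕ) : BoundedBy x (.eq a b)
  | pred (p : PL) (a : ℕ) : BoundedBy x (.pred p a)
  | not {φ : FOW PL} : BoundedBy x φ → BoundedBy x (.not φ)
  | disj {φ ψ : FOW PL} : BoundedBy x φ → BoundedBy x ψ → BoundedBy x (.disj φ ψ)
  | conj {φ ψ : FOW PL} : BoundedBy x φ → BoundedBy x ψ → BoundedBy x (.conj φ ψ)
  | ex (y : ℕ) {φ : FOW PL} : BoundedBy x φ →
      BoundedBy x (.ex y (.conj (FOW.le y x) φ))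
  | all (y : ℕ) {φ : FOW PL} : BoundedBy x φ →
      BoundedBy x (.all y (FOW.impl (FOW.le y x) φ))

/-- EBFO sentences: `∃x.φ(x)` with `φ(x)` bounded and with exactly one free variable `x`. -/
def IsEBFO {PL : Type} (ψ : FOW PL) : Prop :=
  ∃ (x : ℕ) (φ : FOW PL), ψ = .ex x φ ∧ BoundedBy x φ ∧ φ.free = {x}

/-- The ω-language of a sentence (the valuation is irrelevant). -/
def LinfSent {PL : Type} (ψ : FOW PL) : Set (ℕ → Set PL) :=
  {σ | FOSat σ ⊤ ψ (fun _ => 0)}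


section Aux
variable {PL : Type}

/-- Rename every variable (bound and free). -/
def FOW.rename (f : ℕ → ℕ) : FOW PL → FOW PL
  | .lt a c => .lt (f a) (f c)
  | .eq a c => .eq (f a) (f c)
  | .pred p a => .pred p (f a)
  | .not φ => .not (φ.rename f)
  | .disj φ ψ => .disj (φ.rename f) (ψ.rename f)
  | .conj φ ψ => .conj (φ.rename f) (ψ.rename f)
  | .ex u φ => .ex (f u) (φ.rename f)
  | .all u φ => .all (f u) (φ.rename f)

/-- Bound variables. -/
def FOW.bnd : FOW PL → Finset ℕ
  | .lt _ _ => ∅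
  | .eq _ _ => ∅
  | .pred _ _ => ∅
  | .not φ => φ.bnd
  | .disj φ ψ => φ.bnd ∪ ψ.bnd
  | .conj φ ψ => φ.bnd ∪ ψ.bnd
  | .ex u φ => insert u φ.bnd
  | .all u φ => insert u φ.bnd

/-- Substitution of variable `u` by variable `t` (stops under rebinding of `u`). -/
def FOW.subst (u t : ℕ) : FOW PL → FOW PL
  | .lt a c => .lt (if a = u then t else a) (if c = u then t else c)
  | .eq a c => .eq (if a = u then t else a) (if c = u then t else c)
  | .pred p a => .pred p (if a = u then t else a)
  | .not φ => .not (φ.subst u t)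
  | .disj φ ψ => .disj (φ.subst u t) (ψ.subst u t)
  | .conj φ ψ => .conj (φ.subst u t) (ψ.subst u t)
  | .ex w φ => if w = u then .ex w φ else .ex w (φ.subst u t)
  | .all w φ => if w = u then .all w φ else .all w (φ.subst u t)

lemma bnd_subst (u t : ℕ) : ∀ φ : FOW PL, (φ.subst u t).bnd = φ.bnd := by
  intro φ
  induction φ with
  | lt a c => rfl
  | eq a c => rfl
  | pred p a => rfl
  | not φ ih => simp [FOW.subst, FOW.bnd, ih]
  | disj φ ψ ih1 ih2 => simp [FOW.subst, FOW.bnd, ih1, ih2]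
  | conj φ ψ ih1 ih2 => simp [FOW.subst, FOW.bnd, ih1, ih2]
  | ex w φ ih => by_cases h : w = u <;> simp [FOW.subst, h, FOW.bnd, ih]
  | all w φ ih => by_cases h : w = u <;> simp [FOW.subst, h, FOW.bnd, ih]

lemma free_subst (u t : ℕ) : ∀ (φ : FOW PL) (k : ℕ), k ∈ (φ.subst u t).free →
    k = t ∨ (k ≠ u ∧ k ∈ φ.free) := by
  intro φ
  induction φ with
  | lt a c =>
    intro k hk
    simp [FOW.subst, FOW.free] at hk
    rcases hk with h | h <;> split at h <;> simp [FOW.free] <;> omega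
  | eq a c =>
    intro k hk
    simp [FOW.subst, FOW.free] at hk
    rcases hk with h | h <;> split at h <;> simp [FOW.free] <;> omega
  | pred p a =>
    intro k hk
    simp [FOW.subst, FOW.free] at hk
    split at hk <;> simp [FOW.free] <;> omega
  | not φ ih => exact ih
  | disj φ ψ ih1 ih2 =>
    intro k hk
    simp only [FOW.subst, FOW.free, Finset.mem_union] at hk ⊢
    rcases hk with hk | hk
    · rcases ih1 k hk with h | h
      · exact Or.inl h
      · exact Or.inr ⟨h.1, Or.inl h.2⟩
    · rcases ih2 k hk with h | h
      · exact Or.inl h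
      · exact Or.inr ⟨h.1, Or.inr h.2⟩
  | conj φ ψ ih1 ih2 =>
    intro k hk
    simp only [FOW.subst, FOW.free, Finset.mem_union] at hk ⊢
    rcases hk with hk | hk
    · rcases ih1 k hk with h | h
      · exact Or.inl h
      · exact Or.inr ⟨h.1, Or.inl h.2⟩
    · rcases ih2 k hk with h | h
      · exact Or.inl h
      · exact Or.inr ⟨h.1, Or.inr h.2⟩
  | ex w φ ih =>
    intro k hk
    by_cases h : w = u
    · subst h
      simp only [FOW.subst, if_pos rfl, ↓reduceIte, FOW.free, Finset.mem_erase] at hk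
      exact Or.inr ⟨hk.1, Finset.mem_erase.mpr hk⟩
    · simp only [FOW.subst, if_neg h, FOW.free, Finset.mem_erase] at hk
      obtain ⟨hkw, hk⟩ := hk
      rcases ih k hk with h' | h'
      · exact Or.inl h'
      · exact Or.inr ⟨h'.1, Finset.mem_erase.mpr ⟨hkw, h'.2⟩⟩
  | all w φ ih =>
    intro k hk
    by_cases h : w = u
    · subst h
      simp only [FOW.subst, if_pos rfl, ↓reduceIte, FOW.free, Finset.mem_erase] at hk
      exact Or.inr ⟨hk.1, Finset.mem_erase.mpr hk⟩
    · simp only [FOW.subst, if_neg h, FOW.free, Finset.mem_erase] at hk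
      obtain ⟨hkw, hk⟩ := hk
      rcases ih k hk with h' | h'
      · exact Or.inl h'
      · exact Or.inr ⟨h'.1, Finset.mem_erase.mpr ⟨hkw, h'.2⟩⟩

lemma free_rename (f : ℕ → ℕ) : ∀ (φ : FOW PL) (k : ℕ), k ∈ (φ.rename f).free →
    ∃ j ∈ φ.free, k = f j := by
  intro φ
  induction φ with
  | lt a c => intro k hk; simp [FOW.rename, FOW.free] at hk ⊢; tauto
  | eq a c => intro k hk; simp [FOW.rename, FOW.free] at hk ⊢; tauto
  | pred p a => intro k hk; simp [FOW.rename, FOW.free] at hk ⊢; tauto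
  | not φ ih => exact ih
  | disj φ ψ ih1 ih2 =>
    intro k hk
    simp only [FOW.rename, FOW.free, Finset.mem_union] at hk ⊢
    rcases hk with hk | hk
    · obtain ⟨j, hj, rfl⟩ := ih1 k hk; exact ⟨j, Or.inl hj, rfl⟩
    · obtain ⟨j, hj, rfl⟩ := ih2 k hk; exact ⟨j, Or.inr hj, rfl⟩
  | conj φ ψ ih1 ih2 =>
    intro k hk
    simp only [FOW.rename, FOW.free, Finset.mem_union] at hk ⊢
    rcases hk with hk | hk
    · obtain ⟨j, hj, rfl⟩ := ih1 k hk; exact ⟨j, Or.inl hj, rfl⟩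
    · obtain ⟨j, hj, rfl⟩ := ih2 k hk; exact ⟨j, Or.inr hj, rfl⟩
  | ex w φ ih =>
    intro k hk
    simp only [FOW.rename, FOW.free, Finset.mem_erase] at hk ⊢
    obtain ⟨hne, hk⟩ := hk
    obtain ⟨j, hj, rfl⟩ := ih k hk
    exact ⟨j, ⟨fun h => hne (by rw [h]), hj⟩, rfl⟩
  | all w φ ih =>
    intro k hk
    simp only [FOW.rename, FOW.free, Finset.mem_erase] at hk ⊢
    obtain ⟨hne, hk⟩ := hk
    obtain ⟨j, hj, rfl⟩ := ih k hk
    exact ⟨j, ⟨fun h => hne (by rw [h]), hj⟩, rfl⟩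

lemma bnd_rename (f : ℕ → ℕ) : ∀ (φ : FOW PL) (k : ℕ), k ∈ (φ.rename f).bnd →
    ∃ j, k = f j := by
  intro φ
  induction φ with
  | lt a c => intro k hk; simp [FOW.rename, FOW.bnd] at hk
  | eq a c => intro k hk; simp [FOW.rename, FOW.bnd] at hk
  | pred p a => intro k hk; simp [FOW.rename, FOW.bnd] at hk
  | not φ ih => exact ih
  | disj φ ψ ih1 ih2 =>
    intro k hk
    simp only [FOW.rename, FOW.bnd, Finset.mem_union] at hk
    rcases hk with hk | hk
    exacts [ih1 k hk, ih2 k hk]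
  | conj φ ψ ih1 ih2 =>
    intro k hk
    simp only [FOW.rename, FOW.bnd, Finset.mem_union] at hk
    rcases hk with hk | hk
    exacts [ih1 k hk, ih2 k hk]
  | ex w φ ih =>
    intro k hk
    simp only [FOW.rename, FOW.bnd, Finset.mem_insert] at hk
    rcases hk with rfl | hk
    exacts [⟨w, rfl⟩, ih k hk]
  | all w φ ih =>
    intro k hk
    simp only [FOW.rename, FOW.bnd, Finset.mem_insert] at hk
    rcases hk with rfl | hk
    exacts [⟨w, rfl⟩, ih k hk]

lemma FOSat_rename (σ : ℕ → Set PL) (L : ℕ∞) (f : ℕ → ℕ) (hf : Function.Injective f) :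
    ∀ (φ : FOW PL) (v : ℕ → ℕ), FOSat σ L (φ.rename f) v ↔ FOSat σ L φ (v ∘ f) := by
  intro φ
  induction φ with
  | lt a c => intro v; simp [FOW.rename, FOSat, Function.comp]
  | eq a c => intro v; simp [FOW.rename, FOSat, Function.comp]
  | pred p a => intro v; simp [FOW.rename, FOSat, Function.comp]
  | not φ ih => intro v; simp [FOW.rename, FOSat, ih]
  | disj φ ψ ih1 ih2 => intro v; simp [FOW.rename, FOSat, ih1, ih2]
  | conj φ ψ ih1 ih2 => intro v; simp [FOW.rename, FOSat, ih1, ih2]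
  | ex w φ ih =>
    intro v
    simp only [FOW.rename, FOSat, ih]
    refine exists_congr fun n => and_congr_right fun _ => ?_
    have : (Function.update v (f w) n) ∘ f = Function.update (v ∘ f) w n := by
      funext z
      by_cases h : z = w
      · subst h; simp [Function.comp, Function.update_self]
      · simp [Function.comp, Function.update_of_ne (fun hc => h (hf hc)),
          Function.update_of_ne h]
    rw [this]
  | all w φ ih =>
    intro v
    simp only [FOW.rename, FOSat, ih]
    refine forall_congr' fun n => imp_congr_right fun _ => ?_
    have : (Function.update v (f w) n) ∘ f = Function.update (v ∘ f) w n := by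
      funext z
      by_cases h : z = w
      · subst h; simp [Function.comp, Function.update_self]
      · simp [Function.comp, Function.update_of_ne (fun hc => h (hf hc)),
          Function.update_of_ne h]
    rw [this]

lemma FOSat_congr_v (σ : ℕ → Set PL) (L : ℕ∞) :
    ∀ (φ : FOW PL) (v v' : ℕ → ℕ), (∀ z ∈ φ.free, v z = v' z) →
      (FOSat σ L φ v ↔ FOSat σ L φ v') := by
  intro φ
  induction φ with
  | lt a c => intro v v' h; simp [FOW.free] at h; simp [FOSat, h.1, h.2]
  | eq a c => intro v v' h; simp [FOW.free] at h; simp [FOSat, h.1, h.2]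
  | pred p a => intro v v' h; simp [FOW.free] at h; simp [FOSat, h]
  | not φ ih => intro v v' h; simp only [FOSat]; rw [ih v v' h]
  | disj φ ψ ih1 ih2 =>
    intro v v' h
    simp only [FOW.free] at h
    simp only [FOSat]
    rw [ih1 v v' fun z hz => h z (Finset.mem_union_left _ hz),
        ih2 v v' fun z hz => h z (Finset.mem_union_right _ hz)]
  | conj φ ψ ih1 ih2 =>
    intro v v' h
    simp only [FOW.free] at h
    simp only [FOSat]
    rw [ih1 v v' fun z hz => h z (Finset.mem_union_left _ hz),
        ih2 v v' fun z hz => h z (Finset.mem_union_right _ hz)]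
  | ex w φ ih =>
    intro v v' h
    simp only [FOSat]
    refine exists_congr fun n => and_congr_right fun _ => ih _ _ fun z hz => ?_
    by_cases hzw : z = w
    · subst hzw; simp [Function.update_self]
    · simp only [Function.update_of_ne hzw]
      exact h z (by simp [FOW.free, Finset.mem_erase, hzw, hz])
  | all w φ ih =>
    intro v v' h
    simp only [FOSat]
    refine forall_congr' fun n => imp_congr_right fun _ => ih _ _ fun z hz => ?_
    by_cases hzw : z = w
    · subst hzw; simp [Function.update_self]
    · simp only [Function.update_of_ne hzw]
      exact h z (by simp [FOW.free, Finset.mem_erase, hzw, hz])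

lemma FOSat_subst (σ : ℕ → Set PL) (L : ℕ∞) (t : ℕ) :
    ∀ (φ : FOW PL) (u : ℕ) (v : ℕ → ℕ), t ∉ φ.bnd →
      (FOSat σ L (φ.subst u t) v ↔ FOSat σ L φ (Function.update v u (v t))) := by
  intro φ
  induction φ with
  | lt a c =>
    intro u v _
    have ha : v (if a = u then t else a) = Function.update v u (v t) a := by
      by_cases h : a = u <;> simp [h, Function.update_apply]
    have hc : v (if c = u then t else c) = Function.update v u (v t) c := by
      by_cases h : c = u <;> simp [h, Function.update_apply]
    simp only [FOW.subst, FOSat, ha, hc]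
  | eq a c =>
    intro u v _
    have ha : v (if a = u then t else a) = Function.update v u (v t) a := by
      by_cases h : a = u <;> simp [h, Function.update_apply]
    have hc : v (if c = u then t else c) = Function.update v u (v t) c := by
      by_cases h : c = u <;> simp [h, Function.update_apply]
    simp only [FOW.subst, FOSat, ha, hc]
  | pred p a =>
    intro u v _
    have ha : v (if a = u then t else a) = Function.update v u (v t) a := by
      by_cases h : a = u <;> simp [h, Function.update_apply]
    simp only [FOW.subst, FOSat, ha]
  | not φ ih => intro u v ht; simp only [FOW.subst, FOSat]; rw [ih u v ht]
  | disj φ ψ ih1 ih2 =>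
    intro u v ht
    simp only [FOW.bnd, Finset.mem_union, not_or] at ht
    simp only [FOW.subst, FOSat]
    rw [ih1 u v ht.1, ih2 u v ht.2]
  | conj φ ψ ih1 ih2 =>
    intro u v ht
    simp only [FOW.bnd, Finset.mem_union, not_or] at ht
    simp only [FOW.subst, FOSat]
    rw [ih1 u v ht.1, ih2 u v ht.2]
  | ex w φ ih =>
    intro u v ht
    simp only [FOW.bnd, Finset.mem_insert, not_or] at ht
    by_cases h : w = u
    · subst h
      simp only [FOW.subst, if_pos rfl, FOSat]
      refine exists_congr fun n => and_congr_right fun _ => ?_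
      rw [Function.update_idem]
    · simp only [FOW.subst, if_neg h, FOSat]
      refine exists_congr fun n => and_congr_right fun _ => ?_
      rw [ih u _ ht.2]
      have h1 : (Function.update v w n) t = v t := Function.update_of_ne ht.1 _ _
      rw [h1, Function.update_comm h]
  | all w φ ih =>
    intro u v ht
    simp only [FOW.bnd, Finset.mem_insert, not_or] at ht
    by_cases h : w = u
    · subst h
      simp only [FOW.subst, if_pos rfl, FOSat]
      refine forall_congr' fun n => imp_congr_right fun _ => ?_
      rw [Function.update_idem]
    · simp only [FOW.subst, if_neg h, FOSat]
      refine forall_congr' fun n => imp_congr_right fun _ => ?_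
      rw [ih u _ ht.2]
      have h1 : (Function.update v w n) t = v t := Function.update_of_ne ht.1 _ _
      rw [h1, Function.update_comm h]

lemma CoSafetyFO_subst (u t : ℕ) : ∀ {φ : FOW PL}, CoSafetyFO φ →
    CoSafetyFO (φ.subst u t) := by
  intro φ h
  induction h with
  | lt x y => exact CoSafetyFO.lt _ _
  | eq x y => exact CoSafetyFO.eq _ _
  | ne x y => exact CoSafetyFO.ne _ _
  | pred p x => exact CoSafetyFO.pred _ _
  | npred p x => exact CoSafetyFO.npred _ _
  | disj _ _ ih1 ih2 => exact CoSafetyFO.disj ih1 ih2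
  | conj _ _ ih1 ih2 => exact CoSafetyFO.conj ih1 ih2
  | ex x y hφ ih =>
    by_cases h : y = u
    · simp only [FOW.subst, if_pos h]
      exact CoSafetyFO.ex x y hφ
    · simp only [FOW.subst, if_neg h, if_neg (fun hc => h hc)]
      exact CoSafetyFO.ex _ y ih
  | all x y z hφ ih =>
    by_cases h : y = u
    · simp only [FOW.subst, if_pos h]
      exact CoSafetyFO.all x y z hφ
    · simp only [FOW.impl, FOW.subst, if_neg h]
      exact CoSafetyFO.all _ y _ ih

/-- Bounded existential block: `χ[u:=0] ∨ χ[u:=b] ∨ ∃u(0<u ∧ u<b ∧ χ)`. -/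
def EXB (u b : ℕ) (χ : FOW PL) : FOW PL :=
  .disj (χ.subst u 0) (.disj (χ.subst u b)
    (.ex u (.conj (.lt 0 u) (.conj (.lt u b) χ))))

/-- Bounded universal block: `χ[u:=0] ∧ χ[u:=b] ∧ ∀u(0<u<b → χ)`. -/
def ALB (u b : ℕ) (χ : FOW PL) : FOW PL :=
  .conj (χ.subst u 0) (.conj (χ.subst u b)
    (.all u (FOW.impl (.conj (.lt 0 u) (.lt u b)) χ)))

/-- Relativization of `φ` (positively if `s = true`, negatively otherwise) to the
positions in `[0, b]`. -/
def rel (b : ℕ) : FOW PL → Bool → FOW PL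
  | .lt a c, true => .lt a c
  | .lt a c, false => .disj (.lt c a) (.eq a c)
  | .eq a c, true => .eq a c
  | .eq a c, false => .not (.eq a c)
  | .pred p a, true => .pred p a
  | .pred p a, false => .not (.pred p a)
  | .not φ, s => rel b φ (!s)
  | .disj φ ψ, true => .disj (rel b φ true) (rel b ψ true)
  | .disj φ ψ, false => .conj (rel b φ false) (rel b ψ false)
  | .conj φ ψ, true => .conj (rel b φ true) (rel b ψ true)
  | .conj φ ψ, false => .disj (rel b φ false) (rel b ψ false)
  | .ex u φ, true => EXB u b (rel b φ true)
  | .ex u φ, false => ALB u b (rel b φ false)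
  | .all u φ, true => ALB u b (rel b φ true)
  | .all u φ, false => EXB u b (rel b φ false)

lemma bnd_EXB (u b : ℕ) (χ : FOW PL) : (EXB u b χ).bnd = insert u χ.bnd := by
  simp [EXB, FOW.bnd, bnd_subst]
lemma bnd_ALB (u b : ℕ) (χ : FOW PL) : (ALB u b χ).bnd = insert u χ.bnd := by
  simp [ALB, FOW.impl, FOW.bnd, bnd_subst]

lemma bnd_rel (b : ℕ) : ∀ (φ : FOW PL) (s : Bool), (rel b φ s).bnd ⊆ φ.bnd := by
  intro φ
  induction φ with
  | lt a c => intro s; cases s <;> simp [rel, FOW.bnd]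
  | eq a c => intro s; cases s <;> simp [rel, FOW.bnd]
  | pred p a => intro s; cases s <;> simp [rel, FOW.bnd]
  | not φ ih => intro s; exact ih (!s)
  | disj φ ψ ih1 ih2 =>
    intro s; cases s <;> simp only [rel, FOW.bnd] <;>
      exact Finset.union_subset_union (ih1 _) (ih2 _)
  | conj φ ψ ih1 ih2 =>
    intro s; cases s <;> simp only [rel, FOW.bnd] <;>
      exact Finset.union_subset_union (ih1 _) (ih2 _)
  | ex u φ ih =>
    intro s; cases s <;> simp only [rel, bnd_EXB, bnd_ALB] <;>
      exact Finset.insert_subset_insert _ (ih _)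
  | all u φ ih =>
    intro s; cases s <;> simp only [rel, bnd_EXB, bnd_ALB] <;>
      exact Finset.insert_subset_insert _ (ih _)

lemma free_EXB (u b : ℕ) (χ : FOW PL) (k : ℕ) (hk : k ∈ (EXB u b χ).free) :
    k = 0 ∨ k = b ∨ (k ≠ u ∧ k ∈ χ.free) := by
  simp only [EXB, FOW.free, Finset.mem_union, Finset.mem_erase] at hk
  rcases hk with hk | hk | hk
  · rcases free_subst u 0 χ k hk with h | h
    exacts [Or.inl h, Or.inr (Or.inr h)]
  · rcases free_subst u b χ k hk with h | h
    exacts [Or.inr (Or.inl h), Or.inr (Or.inr h)]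
  · obtain ⟨hku, hk⟩ := hk
    simp only [FOW.free, Finset.mem_union, Finset.mem_insert, Finset.mem_singleton] at hk
    rcases hk with (h | h) | (h | h) | h
    · exact Or.inl h
    · exact absurd h hku
    · exact absurd h hku
    · exact Or.inr (Or.inl h)
    · exact Or.inr (Or.inr ⟨hku, h⟩)

lemma free_ALB (u b : ℕ) (χ : FOW PL) (k : ℕ) (hk : k ∈ (ALB u b χ).free) :
    k = 0 ∨ k = b ∨ (k ≠ u ∧ k ∈ χ.free) := by
  simp only [ALB, FOW.impl, FOW.free, Finset.mem_union, Finset.mem_erase] at hk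
  rcases hk with hk | hk | hk
  · rcases free_subst u 0 χ k hk with h | h
    exacts [Or.inl h, Or.inr (Or.inr h)]
  · rcases free_subst u b χ k hk with h | h
    exacts [Or.inr (Or.inl h), Or.inr (Or.inr h)]
  · obtain ⟨hku, hk⟩ := hk
    simp only [FOW.free, Finset.mem_union, Finset.mem_insert, Finset.mem_singleton] at hk
    rcases hk with ((h | h) | (h | h)) | h
    · exact Or.inl h
    · exact absurd h hku
    · exact absurd h hku
    · exact Or.inr (Or.inl h)
    · exact Or.inr (Or.inr ⟨hku, h⟩)

lemma free_rel (b : ℕ) : ∀ (φ : FOW PL) (s : Bool) (k : ℕ), k ∈ (rel b φ s).free →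
    k = 0 ∨ k = b ∨ k ∈ φ.free := by
  intro φ
  induction φ with
  | lt a c =>
    intro s k hk; cases s <;> simp [rel, FOW.free] at hk <;> simp [FOW.free] <;> tauto
  | eq a c =>
    intro s k hk; cases s <;> simp [rel, FOW.free] at hk <;> simp [FOW.free] <;> tauto
  | pred p a =>
    intro s k hk; cases s <;> simp [rel, FOW.free] at hk <;> simp [FOW.free] <;> tauto
  | not φ ih => intro s k hk; exact ih (!s) k hk
  | disj φ ψ ih1 ih2 =>
    intro s k hk
    cases s <;> simp only [rel, FOW.free, Finset.mem_union] at hk <;>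
    · rcases hk with hk | hk
      · rcases ih1 _ k hk with h | h | h
        exacts [Or.inl h, Or.inr (Or.inl h),
          Or.inr (Or.inr (by simp only [FOW.free, Finset.mem_union]; exact Or.inl h))]
      · rcases ih2 _ k hk with h | h | h
        exacts [Or.inl h, Or.inr (Or.inl h),
          Or.inr (Or.inr (by simp only [FOW.free, Finset.mem_union]; exact Or.inr h))]
  | conj φ ψ ih1 ih2 =>
    intro s k hk
    cases s <;> simp only [rel, FOW.free, Finset.mem_union] at hk <;>
    · rcases hk with hk | hk
      · rcases ih1 _ k hk with h | h | h
        exacts [Or.inl h, Or.inr (Or.inl h),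
          Or.inr (Or.inr (by simp only [FOW.free, Finset.mem_union]; exact Or.inl h))]
      · rcases ih2 _ k hk with h | h | h
        exacts [Or.inl h, Or.inr (Or.inl h),
          Or.inr (Or.inr (by simp only [FOW.free, Finset.mem_union]; exact Or.inr h))]
  | ex u φ ih =>
    intro s k hk
    cases s <;> simp only [rel] at hk <;>
      [rcases free_ALB _ _ _ _ hk with h | h | ⟨hku, h⟩;
       rcases free_EXB _ _ _ _ hk with h | h | ⟨hku, h⟩] <;>
    · first
      | exact Or.inl h
      | exact Or.inr (Or.inl h)
      | rcases ih _ k h with h' | h' | h'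
        · exact Or.inl h'
        · exact Or.inr (Or.inl h')
        · exact Or.inr (Or.inr (Finset.mem_erase.mpr ⟨hku, h'⟩))
  | all u φ ih =>
    intro s k hk
    cases s <;> simp only [rel] at hk <;>
      [rcases free_EXB _ _ _ _ hk with h | h | ⟨hku, h⟩;
       rcases free_ALB _ _ _ _ hk with h | h | ⟨hku, h⟩] <;>
    · first
      | exact Or.inl h
      | exact Or.inr (Or.inl h)
      | rcases ih _ k h with h' | h' | h'
        · exact Or.inl h'
        · exact Or.inr (Or.inl h')
        · exact Or.inr (Or.inr (Finset.mem_erase.mpr ⟨hku, h'⟩))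

lemma CoSafetyFO_rel (b : ℕ) : ∀ (φ : FOW PL) (s : Bool), CoSafetyFO (rel b φ s) := by
  intro φ
  induction φ with
  | lt a c =>
    intro s; cases s
    · exact CoSafetyFO.disj (CoSafetyFO.lt _ _) (CoSafetyFO.eq _ _)
    · exact CoSafetyFO.lt _ _
  | eq a c =>
    intro s; cases s
    · exact CoSafetyFO.ne _ _
    · exact CoSafetyFO.eq _ _
  | pred p a =>
    intro s; cases s
    · exact CoSafetyFO.npred _ _
    · exact CoSafetyFO.pred _ _
  | not φ ih => intro s; exact ih (!s)
  | disj φ ψ ih1 ih2 =>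
    intro s; cases s
    · exact CoSafetyFO.conj (ih1 _) (ih2 _)
    · exact CoSafetyFO.disj (ih1 _) (ih2 _)
  | conj φ ψ ih1 ih2 =>
    intro s; cases s
    · exact CoSafetyFO.disj (ih1 _) (ih2 _)
    · exact CoSafetyFO.conj (ih1 _) (ih2 _)
  | ex u φ ih =>
    intro s; cases s <;> simp only [rel]
    · exact CoSafetyFO.conj (CoSafetyFO_subst _ _ (ih _))
        (CoSafetyFO.conj (CoSafetyFO_subst _ _ (ih _))
          (CoSafetyFO.all 0 u b (ih _)))
    · exact CoSafetyFO.disj (CoSafetyFO_subst _ _ (ih _))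
        (CoSafetyFO.disj (CoSafetyFO_subst _ _ (ih _))
          (CoSafetyFO.ex 0 u (CoSafetyFO.conj (CoSafetyFO.lt _ _) (ih _))))
  | all u φ ih =>
    intro s; cases s <;> simp only [rel]
    · exact CoSafetyFO.disj (CoSafetyFO_subst _ _ (ih _))
        (CoSafetyFO.disj (CoSafetyFO_subst _ _ (ih _))
          (CoSafetyFO.ex 0 u (CoSafetyFO.conj (CoSafetyFO.lt _ _) (ih _))))
    · exact CoSafetyFO.conj (CoSafetyFO_subst _ _ (ih _))
        (CoSafetyFO.conj (CoSafetyFO_subst _ _ (ih _))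
          (CoSafetyFO.all 0 u b (ih _)))

lemma EXB_sat {σ : ℕ → Set PL} {L : ℕ∞} {u b : ℕ} {χ : FOW PL} {v : ℕ → ℕ}
    (hu0 : u ≠ 0) (hub : u ≠ b) (h0 : (0:ℕ) ∉ χ.bnd) (hb : b ∉ χ.bnd)
    (hv0 : v 0 = 0) (hL : ((v b : ℕ) : ℕ∞) < L) :
    FOSat σ L (EXB u b χ) v ↔ ∃ n ≤ v b, FOSat σ L χ (Function.update v u n) := by
  have hw0 : ∀ n : ℕ, Function.update v u n 0 = 0 := fun n => by
    rw [Function.update_of_ne (Ne.symm hu0)]; exact hv0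
  have hwu : ∀ n : ℕ, Function.update v u n u = n := fun n => Function.update_self _ _ _
  have hwb : ∀ n : ℕ, Function.update v u n b = v b := fun n =>
    Function.update_of_ne (Ne.symm hub) _ _
  simp only [EXB, FOSat]
  rw [FOSat_subst σ L 0 χ u v h0, FOSat_subst σ L b χ u v hb, hv0]
  constructor
  · rintro (h | h | ⟨n, hnL, h1, h2, h3⟩)
    · exact ⟨0, Nat.zero_le _, h⟩
    · exact ⟨v b, le_refl _, h⟩
    · rw [hwu, hwb] at h2
      exact ⟨n, le_of_lt h2, h3⟩
  · rintro ⟨n, hn, hs⟩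
    rcases Nat.lt_or_ge 0 n with hpos | hzero
    · rcases Nat.lt_or_ge n (v b) with hlt | hge
      · refine Or.inr (Or.inr ⟨n, lt_of_le_of_lt (Nat.cast_le.mpr hn) hL, ?_, ?_, hs⟩)
        · rw [hw0, hwu]; exact hpos
        · rw [hwu, hwb]; exact hlt
      · have : n = v b := le_antisymm hn hge
        subst this
        exact Or.inr (Or.inl hs)
    · have : n = 0 := Nat.le_zero.mp hzero
      subst this
      exact Or.inl hs

lemma ALB_sat {σ : ℕ → Set PL} {L : ℕ∞} {u b : ℕ} {χ : FOW PL} {v : ℕ → ℕ}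
    (hu0 : u ≠ 0) (hub : u ≠ b) (h0 : (0:ℕ) ∉ χ.bnd) (hb : b ∉ χ.bnd)
    (hv0 : v 0 = 0) (hL : ((v b : ℕ) : ℕ∞) < L) :
    FOSat σ L (ALB u b χ) v ↔ ∀ n ≤ v b, FOSat σ L χ (Function.update v u n) := by
  have hw0 : ∀ n : ℕ, Function.update v u n 0 = 0 := fun n => by
    rw [Function.update_of_ne (Ne.symm hu0)]; exact hv0
  have hwu : ∀ n : ℕ, Function.update v u n u = n := fun n => Function.update_self _ _ _
  have hwb : ∀ n : ℕ, Function.update v u n b = v b := fun n =>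
    Function.update_of_ne (Ne.symm hub) _ _
  simp only [ALB, FOW.impl, FOSat]
  rw [FOSat_subst σ L 0 χ u v h0, FOSat_subst σ L b χ u v hb, hv0]
  constructor
  · rintro ⟨hs0, hsb, hall⟩ n hn
    rcases Nat.lt_or_ge 0 n with hpos | hzero
    · rcases Nat.lt_or_ge n (v b) with hlt | hge
      · rcases hall n (lt_of_le_of_lt (Nat.cast_le.mpr hn) hL) with hneg | hs
        · exfalso
          exact hneg ⟨by rw [hw0, hwu]; exact hpos, by rw [hwu, hwb]; exact hlt⟩
        · exact hs
      · have : n = v b := le_antisymm hn hge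
        subst this; exact hsb
    · have : n = 0 := Nat.le_zero.mp hzero
      subst this; exact hs0
  · intro H
    refine ⟨H 0 (Nat.zero_le _), H (v b) (le_refl _), fun n hnL => ?_⟩
    by_cases hc : Function.update v u n 0 < Function.update v u n u ∧
        Function.update v u n u < Function.update v u n b
    · refine Or.inr (H n ?_)
      rw [hwu, hwb] at hc
      exact le_of_lt hc.2
    · exact Or.inl hc

lemma rel_correct (σ : ℕ → Set PL) (L : ℕ∞) (b : ℕ) :
    ∀ (φ : FOW PL) (s : Bool) (v : ℕ → ℕ),
      (0:ℕ) ∉ φ.bnd → b ∉ φ.bnd → v 0 = 0 → (∀ z, v z ≤ v b) →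
      ((v b : ℕ) : ℕ∞) < L →
      (FOSat σ L (rel b φ s) v ↔
        cond s (FOSat σ ((v b + 1 : ℕ) : ℕ∞) φ v)
          (¬ FOSat σ ((v b + 1 : ℕ) : ℕ∞) φ v)) := by
  intro φ
  induction φ with
  | lt a c =>
    intro s v _ _ _ _ _
    cases s
    · simp only [rel, FOSat, Bool.cond_false]
      omega
    · simp only [rel, FOSat, Bool.cond_true]
  | eq a c =>
    intro s v _ _ _ _ _
    cases s
    · simp only [rel, FOSat, Bool.cond_false]
    · simp only [rel, FOSat, Bool.cond_true]
  | pred p a =>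
    intro s v _ _ _ _ _
    cases s
    · simp only [rel, FOSat, Bool.cond_false]
    · simp only [rel, FOSat, Bool.cond_true]
  | not φ ih =>
    intro s v h0 hb hv0 hvle hL
    cases s
    · simp only [rel, Bool.not_false, Bool.cond_false, FOSat]
      rw [ih true v h0 hb hv0 hvle hL]
      simp only [Bool.cond_true, not_not]
    · simp only [rel, Bool.not_true, Bool.cond_true, FOSat]
      rw [ih false v h0 hb hv0 hvle hL]
      simp only [Bool.cond_false]
  | disj φ ψ ih1 ih2 =>
    intro s v h0 hb hv0 hvle hL
    simp only [FOW.bnd, Finset.mem_union, not_or] at h0 hb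
    cases s
    · simp only [rel, FOSat, Bool.cond_false]
      rw [ih1 false v h0.1 hb.1 hv0 hvle hL, ih2 false v h0.2 hb.2 hv0 hvle hL]
      simp only [Bool.cond_false]
      tauto
    · simp only [rel, FOSat, Bool.cond_true]
      rw [ih1 true v h0.1 hb.1 hv0 hvle hL, ih2 true v h0.2 hb.2 hv0 hvle hL]
      simp only [Bool.cond_true]
  | conj φ ψ ih1 ih2 =>
    intro s v h0 hb hv0 hvle hL
    simp only [FOW.bnd, Finset.mem_union, not_or] at h0 hb
    cases s
    · simp only [rel, FOSat, Bool.cond_false]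
      rw [ih1 false v h0.1 hb.1 hv0 hvle hL, ih2 false v h0.2 hb.2 hv0 hvle hL]
      simp only [Bool.cond_false]
      tauto
    · simp only [rel, FOSat, Bool.cond_true]
      rw [ih1 true v h0.1 hb.1 hv0 hvle hL, ih2 true v h0.2 hb.2 hv0 hvle hL]
      simp only [Bool.cond_true]
  | ex u φ ih =>
    intro s v h0 hb hv0 hvle hL
    simp only [FOW.bnd, Finset.mem_insert, not_or] at h0 hb
    have hu0 : u ≠ 0 := fun h => h0.1 h.symm
    have hub : u ≠ b := fun h => hb.1 h.symm
    have hr0 : ∀ s', (0:ℕ) ∉ (rel b φ s').bnd := fun s' h => h0.2 (bnd_rel b φ s' h)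
    have hrb : ∀ s', b ∉ (rel b φ s').bnd := fun s' h => hb.2 (bnd_rel b φ s' h)
    have hwb : ∀ n : ℕ, Function.update v u n b = v b := fun n =>
      Function.update_of_ne (Ne.symm hub) _ _
    have hIH : ∀ (s' : Bool) (n : ℕ), n ≤ v b →
        (FOSat σ L (rel b φ s') (Function.update v u n) ↔
          cond s' (FOSat σ ((v b + 1 : ℕ) : ℕ∞) φ (Function.update v u n))
            (¬ FOSat σ ((v b + 1 : ℕ) : ℕ∞) φ (Function.update v u n))) := by
      intro s' n hn
      have h1 : Function.update v u n 0 = 0 := by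
        rw [Function.update_of_ne (Ne.symm hu0)]; exact hv0
      have h2 : ∀ z, Function.update v u n z ≤ Function.update v u n b := by
        intro z
        rw [hwb]
        by_cases hz : z = u
        · subst hz; rw [Function.update_self]; exact hn
        · rw [Function.update_of_ne hz]; exact hvle z
      have h3 : ((Function.update v u n b : ℕ) : ℕ∞) < L := by rw [hwb]; exact hL
      have := ih s' (Function.update v u n) h0.2 hb.2 h1 h2 h3
      rwa [hwb] at this
    have hcast : ∀ n : ℕ, ((n : ℕ) : ℕ∞) < ((v b + 1 : ℕ) : ℕ∞) ↔ n ≤ v b := by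
      intro n; rw [Nat.cast_lt]; omega
    cases s
    · simp only [rel, Bool.cond_false]
      rw [ALB_sat hu0 hub (hr0 false) (hrb false) hv0 hL]
      simp only [FOSat, not_exists]
      constructor
      · intro H n
        intro hc
        rcases hc with ⟨hnlt, hsat⟩
        have hn : n ≤ v b := (hcast n).mp hnlt
        exact ((hIH false n hn).mp (H n hn)) hsat
      · intro H n hn
        rw [hIH false n hn]
        simp only [Bool.cond_false]
        intro hsat
        exact H n ⟨(hcast n).mpr hn, hsat⟩
    · simp only [rel, Bool.cond_true]
      rw [EXB_sat hu0 hub (hr0 true) (hrb true) hv0 hL]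
      simp only [FOSat]
      constructor
      · rintro ⟨n, hn, hs⟩
        exact ⟨n, (hcast n).mpr hn, (hIH true n hn).mp hs⟩
      · rintro ⟨n, hnlt, hs⟩
        have hn : n ≤ v b := (hcast n).mp hnlt
        exact ⟨n, hn, (hIH true n hn).mpr hs⟩
  | all u φ ih =>
    intro s v h0 hb hv0 hvle hL
    simp only [FOW.bnd, Finset.mem_insert, not_or] at h0 hb
    have hu0 : u ≠ 0 := fun h => h0.1 h.symm
    have hub : u ≠ b := fun h => hb.1 h.symm
    have hr0 : ∀ s', (0:ℕ) ∉ (rel b φ s').bnd := fun s' h => h0.2 (bnd_rel b φ s' h)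
    have hrb : ∀ s', b ∉ (rel b φ s').bnd := fun s' h => hb.2 (bnd_rel b φ s' h)
    have hwb : ∀ n : ℕ, Function.update v u n b = v b := fun n =>
      Function.update_of_ne (Ne.symm hub) _ _
    have hIH : ∀ (s' : Bool) (n : ℕ), n ≤ v b →
        (FOSat σ L (rel b φ s') (Function.update v u n) ↔
          cond s' (FOSat σ ((v b + 1 : ℕ) : ℕ∞) φ (Function.update v u n))
            (¬ FOSat σ ((v b + 1 : ℕ) : ℕ∞) φ (Function.update v u n))) := by
      intro s' n hn
      have h1 : Function.update v u n 0 = 0 := by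
        rw [Function.update_of_ne (Ne.symm hu0)]; exact hv0
      have h2 : ∀ z, Function.update v u n z ≤ Function.update v u n b := by
        intro z
        rw [hwb]
        by_cases hz : z = u
        · subst hz; rw [Function.update_self]; exact hn
        · rw [Function.update_of_ne hz]; exact hvle z
      have h3 : ((Function.update v u n b : ℕ) : ℕ∞) < L := by rw [hwb]; exact hL
      have := ih s' (Function.update v u n) h0.2 hb.2 h1 h2 h3
      rwa [hwb] at this
    have hcast : ∀ n : ℕ, ((n : ℕ) : ℕ∞) < ((v b + 1 : ℕ) : ℕ∞) ↔ n ≤ v b := by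
      intro n; rw [Nat.cast_lt]; omega
    cases s
    · simp only [rel, Bool.cond_false]
      rw [EXB_sat hu0 hub (hr0 false) (hrb false) hv0 hL]
      simp only [FOSat, not_forall]
      constructor
      · rintro ⟨n, hn, hs⟩
        exact ⟨n, (hcast n).mpr hn, (hIH false n hn).mp hs⟩
      · rintro ⟨n, hnlt, hs⟩
        have hn : n ≤ v b := (hcast n).mp hnlt
        exact ⟨n, hn, (hIH false n hn).mpr hs⟩
    · simp only [rel, Bool.cond_true]
      rw [ALB_sat hu0 hub (hr0 true) (hrb true) hv0 hL]
      simp only [FOSat]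
      constructor
      · intro H n hnlt
        exact (hIH true n ((hcast n).mp hnlt)).mp (H n ((hcast n).mp hnlt))
      · intro H n hn
        exact (hIH true n hn).mpr (H n ((hcast n).mpr hn))

lemma FOSat_congr_w (L : ℕ∞) : ∀ (φ : FOW PL) (σ σ' : ℕ → Set PL) (v : ℕ → ℕ),
    (∀ n : ℕ, (n:ℕ∞) < L → σ n = σ' n) → (∀ z ∈ φ.free, ((v z : ℕ) : ℕ∞) < L) →
    (FOSat σ L φ v ↔ FOSat σ' L φ v) := by
  intro φ
  induction φ with
  | lt a c => intro σ σ' v _ _; simp [FOSat]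
  | eq a c => intro σ σ' v _ _; simp [FOSat]
  | pred p a =>
    intro σ σ' v hσ hv
    have := hσ (v a) (hv a (by simp [FOW.free]))
    simp [FOSat, this]
  | not φ ih =>
    intro σ σ' v hσ hv
    simp only [FOSat]
    rw [ih σ σ' v hσ hv]
  | disj φ ψ ih1 ih2 =>
    intro σ σ' v hσ hv
    simp only [FOW.free] at hv
    simp only [FOSat]
    rw [ih1 σ σ' v hσ fun z hz => hv z (Finset.mem_union_left _ hz),
        ih2 σ σ' v hσ fun z hz => hv z (Finset.mem_union_right _ hz)]
  | conj φ ψ ih1 ih2 =>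
    intro σ σ' v hσ hv
    simp only [FOW.free] at hv
    simp only [FOSat]
    rw [ih1 σ σ' v hσ fun z hz => hv z (Finset.mem_union_left _ hz),
        ih2 σ σ' v hσ fun z hz => hv z (Finset.mem_union_right _ hz)]
  | ex w φ ih =>
    intro σ σ' v hσ hv
    simp only [FOSat]
    refine exists_congr fun n => and_congr_right fun hn => ih σ σ' _ hσ fun z hz => ?_
    by_cases hzw : z = w
    · subst hzw; rw [Function.update_self]; exact hn
    · rw [Function.update_of_ne hzw]
      exact hv z (by simp [FOW.free, Finset.mem_erase, hzw, hz])
  | all w φ ih =>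
    intro σ σ' v hσ hv
    simp only [FOSat]
    refine forall_congr' fun n => imp_congr_right fun hn => ih σ σ' _ hσ fun z hz => ?_
    by_cases hzw : z = w
    · subst hzw; rw [Function.update_self]; exact hn
    · rw [Function.update_of_ne hzw]
      exact hv z (by simp [FOW.free, Finset.mem_erase, hzw, hz])

lemma cosafety_mono : ∀ {φ : FOW PL}, CoSafetyFO φ →
    ∀ (u w : List (Set PL)) (v : ℕ → ℕ), (∀ z, v z < u.length) →
    FOSat (wordOf u) (u.length : ℕ∞) φ v →
    FOSat (wordOf (u ++ w)) ((u ++ w).length : ℕ∞) φ v := by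
  intro φ h
  induction h with
  | lt x y => exact fun u w v _ hs => hs
  | eq x y => exact fun u w v _ hs => hs
  | ne x y => exact fun u w v _ hs => hs
  | pred p x =>
    intro u w v hv hs
    simp only [FOSat, wordOf] at hs ⊢
    rwa [List.getD_append _ _ _ _ (hv x)]
  | npred p x =>
    intro u w v hv hs
    simp only [FOSat, wordOf] at hs ⊢
    rwa [List.getD_append _ _ _ _ (hv x)]
  | disj _ _ ih1 ih2 =>
    rintro u w v hv (hs | hs)
    · exact Or.inl (ih1 u w v hv hs)
    · exact Or.inr (ih2 u w v hv hs)
  | conj _ _ ih1 ih2 =>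
    rintro u w v hv ⟨hs1, hs2⟩
    exact ⟨ih1 u w v hv hs1, ih2 u w v hv hs2⟩
  | ex x y hφ ih =>
    intro u w v hv hs
    obtain ⟨n, hnL, hlt, hsφ⟩ := hs
    have hn : n < u.length := Nat.cast_lt.mp hnL
    refine ⟨n, ?_, hlt, ih u w _ ?_ hsφ⟩
    · rw [Nat.cast_lt]
      simp only [List.length_append]
      omega
    · intro z
      by_cases hz : z = y
      · subst hz; rw [Function.update_self]; exact hn
      · rw [Function.update_of_ne hz]; exact hv z
  | all x y z hφ ih =>
    intro u w v hv hs n hnL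
    by_cases hc : Function.update v y n x < Function.update v y n y ∧
        Function.update v y n y < Function.update v y n z
    · have hn : n < u.length := by
        by_cases hzy : z = y
        · subst hzy
          exfalso
          exact lt_irrefl _ hc.2
        · have h1 : Function.update v y n y = n := Function.update_self _ _ _
          have h2 : Function.update v y n z = v z := Function.update_of_ne hzy _ _
          rw [h1, h2] at hc
          exact lt_trans hc.2 (hv z)
      have := hs n (Nat.cast_lt.mpr hn)
      rcases this with hneg | hsφ
      · exact absurd hc hneg
      · refine Or.inr (ih u w _ ?_ hsφ)
        intro z'
        by_cases hz : z' = y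
        · subst hz; rw [Function.update_self]; exact hn
        · rw [Function.update_of_ne hz]; exact hv z'
    · exact Or.inl hc

lemma catFin_LfinFO {φ : FOW PL} (h : CoSafetyFO φ) : catFin (LfinFO φ) = LfinFO φ := by
  ext w
  constructor
  · rintro ⟨u, ⟨hu, hsat⟩, v', rfl⟩
    refine ⟨by simp [hu], ?_⟩
    exact cosafety_mono h u v' _ (fun z => List.length_pos_iff.mpr hu) hsat
  · intro hw
    exact ⟨w, hw, [], by simp⟩

lemma catFin_mem_iff (Lg : Set (List (Set PL))) (hne : ∀ u ∈ Lg, u ≠ []) (w : List (Set PL)) :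
    w ∈ catFin Lg ↔ w ≠ [] ∧ ∃ Y < w.length, w.take (Y+1) ∈ Lg := by
  constructor
  · rintro ⟨u, hu, v', rfl⟩
    have hune : u ≠ [] := hne u hu
    have hul : 0 < u.length := List.length_pos_iff.mpr hune
    refine ⟨by simp [hune], u.length - 1, ?_, ?_⟩
    · simp only [List.length_append]; omega
    · have h1 : u.length - 1 + 1 = u.length := by omega
      rw [h1, List.take_left]
      exact hu
  · rintro ⟨hw, Y, hY, htk⟩
    exact ⟨w.take (Y+1), htk, w.drop (Y+1), (List.take_append_drop _ _).symm⟩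

lemma phi_take {φ₀ : FOW PL} {x₀ : ℕ} (hx₀ : φ₀.free = {x₀}) (w : List (Set PL)) (Y : ℕ)
    (hY : Y < w.length) :
    FOSat (wordOf w) ((Y + 1 : ℕ) : ℕ∞)
      ((φ₀.rename (fun n => 2*n+2)).subst (2*x₀+2) 0) (fun _ => 0) ↔
    w.take (Y+1) ∈ LfinFO φ₀ := by
  have hinj : Function.Injective (fun n : ℕ => 2*n+2) := by
    intro a b h
    have h' : 2*a+2 = 2*b+2 := h
    omega
  have hbnd0 : (0:ℕ) ∉ (φ₀.rename (fun n => 2*n+2)).bnd := by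
    intro h
    obtain ⟨j, hj⟩ := bnd_rename _ φ₀ 0 h
    have hj' : (0:ℕ) = 2*j+2 := hj
    omega
  rw [FOSat_subst (wordOf w) _ 0 _ (2*x₀+2) (fun _ => 0) hbnd0]
  have hupd : Function.update (fun _ => (0:ℕ)) (2*x₀+2) ((fun _ => (0:ℕ)) 0) =
      (fun _ => (0:ℕ)) := by
    funext z
    by_cases h : z = 2*x₀+2 <;> simp [Function.update_apply, h]
  rw [hupd]
  rw [FOSat_rename (wordOf w) _ _ hinj φ₀ (fun _ => 0)]
  have hcomp : ((fun _ => (0:ℕ)) ∘ (fun n : ℕ => 2*n+2)) = (fun _ => (0:ℕ)) := rfl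
  rw [hcomp]
  have hagree : ∀ n : ℕ, (n:ℕ∞) < ((Y + 1 : ℕ) : ℕ∞) →
      wordOf w n = wordOf (w.take (Y+1)) n := by
    intro n hn
    have hn' : n < Y + 1 := Nat.cast_lt.mp hn
    simp [wordOf, List.getD, List.getElem?_take, hn']
  have hfree : ∀ z ∈ φ₀.free, (((fun _ => (0:ℕ)) z : ℕ) : ℕ∞) < ((Y + 1 : ℕ) : ℕ∞) := by
    intro z _
    exact_mod_cast Nat.succ_pos Y
  rw [FOSat_congr_w ((Y + 1 : ℕ) : ℕ∞) φ₀ (wordOf w) (wordOf (w.take (Y+1))) _ hagree hfree]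
  have hlen : (w.take (Y+1)).length = Y + 1 := by
    rw [List.length_take]; omega
  constructor
  · intro hs
    refine ⟨?_, ?_⟩
    · intro hc
      rw [hc] at hlen
      simp at hlen
    · rw [hlen]
      exact hs
  · rintro ⟨_, hs⟩
    rw [hlen] at hs
    exact hs

lemma psi_sat_iff {φ'' : FOW PL} (hb0 : (0:ℕ) ∉ φ''.bnd) (hb1 : (1:ℕ) ∉ φ''.bnd)
    (hfree : ∀ k ∈ φ''.free, k = 0) (w : List (Set PL)) (hw : w ≠ []) :
    FOSat (wordOf w) (w.length : ℕ∞)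
      (.disj (rel 0 φ'' true) (.ex 1 (.conj (.lt 0 1) (rel 1 φ'' true)))) (fun _ => 0) ↔
    ∃ Y < w.length, FOSat (wordOf w) ((Y + 1 : ℕ) : ℕ∞) φ'' (fun _ => 0) := by
  have hN : 0 < w.length := List.length_pos_iff.mpr hw
  have hN' : ((0:ℕ) : ℕ∞) < (w.length : ℕ∞) := Nat.cast_lt.mpr hN
  constructor
  · rintro (h | h)
    · have h2 := (rel_correct (wordOf w) _ 0 φ'' true (fun _ => 0) hb0 hb0 rfl
        (fun z => le_refl 0) hN').mp h
      simp only [Bool.cond_true] at h2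
      exact ⟨0, hN, h2⟩
    · obtain ⟨n, hnL, hlt, hs⟩ := h
      have hw0 : Function.update (fun _ => (0:ℕ)) 1 n 0 = 0 :=
        Function.update_of_ne (by omega) _ _
      have hw1 : Function.update (fun _ => (0:ℕ)) 1 n 1 = n := Function.update_self _ _ _
      simp only [FOSat] at hlt
      rw [hw0, hw1] at hlt
      have hL' : ((Function.update (fun _ => (0:ℕ)) 1 n 1 : ℕ) : ℕ∞) < (w.length : ℕ∞) := by
        rw [hw1]; exact hnL
      have h2 := (rel_correct (wordOf w) _ 1 φ'' true _ hb0 hb1 hw0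
        (fun z => by
          rw [hw1]
          by_cases hz : z = 1
          · subst hz; rw [hw1]
          · rw [Function.update_of_ne hz]; omega) hL').mp hs
      simp only [Bool.cond_true, hw1] at h2
      have h3 : FOSat (wordOf w) ((n + 1 : ℕ) : ℕ∞) φ'' (fun _ => 0) := by
        rw [FOSat_congr_v (wordOf w) _ φ'' (Function.update (fun _ => (0:ℕ)) 1 n) (fun _ => 0)
          (fun z hz => by rw [hfree z hz]; exact hw0)] at h2
        exact h2
      exact ⟨n, Nat.cast_lt.mp hnL, h3⟩
  · rintro ⟨Y, hY, hs⟩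
    rcases Nat.eq_zero_or_pos Y with rfl | hpos
    · left
      apply (rel_correct (wordOf w) _ 0 φ'' true (fun _ => 0) hb0 hb0 rfl
        (fun z => le_refl 0) hN').mpr
      simp only [Bool.cond_true]
      exact hs
    · right
      have hw0 : Function.update (fun _ => (0:ℕ)) 1 Y 0 = 0 :=
        Function.update_of_ne (by omega) _ _
      have hw1 : Function.update (fun _ => (0:ℕ)) 1 Y 1 = Y := Function.update_self _ _ _
      refine ⟨Y, Nat.cast_lt.mpr hY, ?_, ?_⟩
      · simp only [FOSat]
        rw [hw0, hw1]; exact hpos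
      · have hL' : ((Function.update (fun _ => (0:ℕ)) 1 Y 1 : ℕ) : ℕ∞) < (w.length : ℕ∞) := by
          rw [hw1]; exact Nat.cast_lt.mpr hY
        apply (rel_correct (wordOf w) _ 1 φ'' true _ hb0 hb1 hw0
          (fun z => by
            rw [hw1]
            by_cases hz : z = 1
            · subst hz; rw [hw1]
            · rw [Function.update_of_ne hz]; omega) hL').mpr
        simp only [Bool.cond_true, hw1]
        rw [FOSat_congr_v (wordOf w) _ φ'' (Function.update (fun _ => (0:ℕ)) 1 Y) (fun _ => 0)
          (fun z hz => by rw [hfree z hz]; exact hw0)]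
        exact hs

lemma exists_cosafety (φ₀ : FOW PL) (x₀ : ℕ) (hx₀ : φ₀.free = {x₀}) :
    ∃ ψ : FOW PL, CoSafetyFO ψ ∧ HasOneFree ψ ∧ catFin (LfinFO φ₀) = LfinFO ψ := by
  set φ'' : FOW PL := (φ₀.rename (fun n => 2*n+2)).subst (2*x₀+2) 0 with hφ''
  have hb : ∀ k ∈ φ''.bnd, k ≠ 0 ∧ k ≠ 1 := by
    intro k hk
    rw [hφ'', bnd_subst] at hk
    obtain ⟨j, hj⟩ := bnd_rename _ φ₀ k hk
    have hj' : k = 2*j+2 := hj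
    omega
  have hb0 : (0:ℕ) ∉ φ''.bnd := fun h => (hb 0 h).1 rfl
  have hb1 : (1:ℕ) ∉ φ''.bnd := fun h => (hb 1 h).2 rfl
  have hfree'' : ∀ k ∈ φ''.free, k = 0 := by
    intro k hk
    rw [hφ''] at hk
    rcases free_subst _ _ _ k hk with h | ⟨hne, h⟩
    · exact h
    · exfalso
      obtain ⟨j, hj, rfl⟩ := free_rename _ φ₀ k h
      rw [hx₀, Finset.mem_singleton] at hj
      subst hj
      exact hne rfl
  refine ⟨.disj (rel 0 φ'' true) (.ex 1 (.conj (.lt 0 1) (rel 1 φ'' true))), ?_, ?_, ?_⟩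
  · exact CoSafetyFO.disj (CoSafetyFO_rel 0 φ'' true)
      (CoSafetyFO.ex 0 1 (CoSafetyFO_rel 1 φ'' true))
  · refine ⟨0, ?_⟩
    apply Finset.ext
    intro k
    rw [Finset.mem_singleton]
    constructor
    · intro hk
      rcases Finset.mem_union.mp hk with hk | hk
      · rcases free_rel 0 φ'' true k hk with h | h | h
        exacts [h, h, hfree'' k h]
      · obtain ⟨hk1, hk⟩ := Finset.mem_erase.mp hk
        rcases Finset.mem_union.mp hk with hk | hk
        · rcases Finset.mem_insert.mp hk with h | h
          · exact h
          · exact absurd (Finset.mem_singleton.mp h) hk1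
        · rcases free_rel 1 φ'' true k hk with h | h | h
          exacts [h, absurd h hk1, hfree'' k h]
    · rintro rfl
      apply Finset.mem_union_right
      apply Finset.mem_erase.mpr
      refine ⟨by omega, Finset.mem_union_left _ (Finset.mem_insert_self 0 {1})⟩
  · ext w
    rw [catFin_mem_iff (LfinFO φ₀) (fun u hu => hu.1) w]
    constructor
    · rintro ⟨hne, Y, hY, htk⟩
      refine ⟨hne, ?_⟩
      rw [psi_sat_iff hb0 hb1 hfree'' w hne]
      exact ⟨Y, hY, (phi_take hx₀ w Y hY).mpr htk⟩
    · rintro ⟨hne, hsat⟩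
      rw [psi_sat_iff hb0 hb1 hfree'' w hne] at hsat
      obtain ⟨Y, hY, h⟩ := hsat
      exact ⟨hne, Y, hY, (phi_take hx₀ w Y hY).mp h⟩

end Aux

end CoSafetyPaper
open CoSafetyPaper in
/-- `⟦coSafetyFO⟧_fin = {L·(2^Σ)^* : L ∈ ⟦FO⟧_fin}`. -/
theorem cosafetyFO_fin_eq_fo_fin_concat (PL : Type) [Fintype PL] :
    CoSafetyFOFin PL = catFin '' FOFin PL := by
  ext Lg
  constructor
  · rintro ⟨φ, hcs, h1, rfl⟩
    exact ⟨LfinFO φ, ⟨φ, h1, rfl⟩, catFin_LfinFO hcs⟩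
  · rintro ⟨L0, ⟨φ₀, ⟨x₀, hx₀⟩, rfl⟩, rfl⟩
    obtain ⟨ψ, hcs, h1, heq⟩ := exists_cosafety φ₀ x₀ hx₀
    exact ⟨ψ, hcs, h1, heq⟩
end

section
/- There is a linear-size translation from coSafetyLTL to coSafetyFO: there exists a constant C > 0 such that for every coSafetyLTL formula φ there exists a coSafetyFO formula φ'(x) with exactly one free variable such that L(φ) = L(φ'(x)) and |φ'(x)| ≤ C·|φ|. -/
namespace CoSafetyPaper

section LinearTranslation
variable {PL : Type}

/-- "no position strictly between `a` and `b`", with bound variable `z`. -/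
def nbtw (a b z : ℕ) : FOW PL :=
  .all z (FOW.impl (.conj (.lt a z) (.lt z b)) (.not (.eq z z)))

/-- The translation.  `trL φ false v n` means "`φ` holds at position `v`";
`trL φ true v n` means "`φ` holds at position `v - 1`".  Variable `0` is the
unique free variable (valued `0`); bound variables are taken fresh from `n`. -/
def trL : LTLF PL → Bool → ℕ → ℕ → FOW PL
  | .pos p, false, v, _ => .pred p v
  | .nneg p, false, v, _ => .not (.pred p v)
  | .pos p, true, v, n =>
      .disj (.conj (nbtw 0 v n) (.pred p 0))
            (.ex n (.conj (.lt 0 n)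
              (.conj (.lt n v) (.conj (nbtw n v (n+1)) (.pred p n)))))
  | .nneg p, true, v, n =>
      .disj (.conj (nbtw 0 v n) (.not (.pred p 0)))
            (.ex n (.conj (.lt 0 n)
              (.conj (.lt n v) (.conj (nbtw n v (n+1)) (.not (.pred p n))))))
  | .disj φ ψ, sh, v, n => .disj (trL φ sh v n) (trL ψ sh v n)
  | .conj φ ψ, sh, v, n => .conj (trL φ sh v n) (trL ψ sh v n)
  | .next φ, false, v, n =>
      .ex n (.conj (.lt v n) (.conj (nbtw v n (n+1)) (trL φ false n (n+2))))
  | .wnext φ, false, v, n =>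
      .ex n (.conj (.lt v n) (.conj (nbtw v n (n+1)) (trL φ false n (n+2))))
  | .next φ, true, v, n => trL φ false v n
  | .wnext φ, true, v, n => trL φ false v n
  | .untl φ ψ, false, v, n =>
      .ex n (.conj (.lt v n) (.conj (trL ψ true n (n+2))
        (.all (n+1) (FOW.impl (.conj (.lt v (n+1)) (.lt (n+1) n))
          (trL φ true (n+1) (n+2))))))
  | .untl φ ψ, true, v, n =>
      .ex n (.conj (.lt 0 n) (.conj (FOW.le v n) (.conj (trL ψ true n (n+2))
        (.all (n+1) (FOW.impl (.conj (.lt 0 (n+1)) (.lt (n+1) n))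
          (.disj (.lt (n+1) v) (trL φ true (n+1) (n+2))))))))
  | .rel _ _, _, _, _ => .eq 0 0

lemma nbtw_cosafety (a b z : ℕ) : CoSafetyFO (nbtw a b z : FOW PL) :=
  CoSafetyFO.all a z b (CoSafetyFO.ne z z)

lemma trL_cosafety {φ : LTLF PL} (h : CoSafetyLTL φ) :
    ∀ (sh : Bool) (v n : ℕ), CoSafetyFO (trL φ sh v n) := by
  induction h with
  | pos p =>
      rintro (_|_) v n <;> simp only [trL]
      · exact CoSafetyFO.pred p v
      · exact CoSafetyFO.disj
          (CoSafetyFO.conj (nbtw_cosafety 0 v n) (CoSafetyFO.pred p 0))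
          (CoSafetyFO.ex 0 n (CoSafetyFO.conj (CoSafetyFO.lt n v)
            (CoSafetyFO.conj (nbtw_cosafety n v (n+1)) (CoSafetyFO.pred p n))))
  | nneg p =>
      rintro (_|_) v n <;> simp only [trL]
      · exact CoSafetyFO.npred p v
      · exact CoSafetyFO.disj
          (CoSafetyFO.conj (nbtw_cosafety 0 v n) (CoSafetyFO.npred p 0))
          (CoSafetyFO.ex 0 n (CoSafetyFO.conj (CoSafetyFO.lt n v)
            (CoSafetyFO.conj (nbtw_cosafety n v (n+1)) (CoSafetyFO.npred p n))))
  | disj hφ hψ ihφ ihψ =>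
      intro sh v n; simp only [trL]
      exact CoSafetyFO.disj (ihφ sh v n) (ihψ sh v n)
  | conj hφ hψ ihφ ihψ =>
      intro sh v n; simp only [trL]
      exact CoSafetyFO.conj (ihφ sh v n) (ihψ sh v n)
  | next hφ ihφ =>
      rintro (_|_) v n <;> simp only [trL]
      · exact CoSafetyFO.ex v n (CoSafetyFO.conj (nbtw_cosafety v n (n+1))
          (ihφ false n (n+2)))
      · exact ihφ false v n
  | wnext hφ ihφ =>
      rintro (_|_) v n <;> simp only [trL]
      · exact CoSafetyFO.ex v n (CoSafetyFO.conj (nbtw_cosafety v n (n+1))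
          (ihφ false n (n+2)))
      · exact ihφ false v n
  | untl hφ hψ ihφ ihψ =>
      rintro (_|_) v n <;> simp only [trL]
      · exact CoSafetyFO.ex v n (CoSafetyFO.conj (ihψ true n (n+2))
          (CoSafetyFO.all v (n+1) n (ihφ true (n+1) (n+2))))
      · exact CoSafetyFO.ex 0 n (CoSafetyFO.conj
          (CoSafetyFO.disj (CoSafetyFO.lt v n) (CoSafetyFO.eq v n))
          (CoSafetyFO.conj (ihψ true n (n+2))
            (CoSafetyFO.all 0 (n+1) n
              (CoSafetyFO.disj (CoSafetyFO.lt (n+1) v) (ihφ true (n+1) (n+2))))))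

lemma trL_size {φ : LTLF PL} (h : CoSafetyLTL φ) :
    ∀ (sh : Bool) (v n : ℕ), (trL φ sh v n).size ≤ 60 * φ.size := by
  induction h with
  | pos p => rintro (_|_) v n <;>
      simp [trL, FOW.size, nbtw, FOW.impl, FOW.le, LTLF.size]
  | nneg p => rintro (_|_) v n <;>
      simp [trL, FOW.size, nbtw, FOW.impl, FOW.le, LTLF.size]
  | disj hφ hψ ihφ ihψ =>
      intro sh v n
      have h1 := ihφ sh v n; have h2 := ihψ sh v n
      simp only [trL, FOW.size, LTLF.size]; omega
  | conj hφ hψ ihφ ihψ =>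
      intro sh v n
      have h1 := ihφ sh v n; have h2 := ihψ sh v n
      simp only [trL, FOW.size, LTLF.size]; omega
  | next hφ ihφ =>
      rintro (_|_) v n
      · have h1 := ihφ false n (n+2)
        simp only [trL, FOW.size, nbtw, FOW.impl, FOW.le, LTLF.size]; omega
      · have h1 := ihφ false v n
        simp only [trL, FOW.size, LTLF.size]; omega
  | wnext hφ ihφ =>
      rintro (_|_) v n
      · have h1 := ihφ false n (n+2)
        simp only [trL, FOW.size, nbtw, FOW.impl, FOW.le, LTLF.size]; omega
      · have h1 := ihφ false v n
        simp only [trL, FOW.size, LTLF.size]; omega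
  | untl hφ hψ ihφ ihψ =>
      rintro (_|_) v n
      · have h1 := ihφ true (n+1) (n+2); have h2 := ihψ true n (n+2)
        simp only [trL, FOW.size, nbtw, FOW.impl, FOW.le, LTLF.size]; omega
      · have h1 := ihφ true (n+1) (n+2); have h2 := ihψ true n (n+2)
        simp only [trL, FOW.size, nbtw, FOW.impl, FOW.le, LTLF.size]; omega

lemma trL_free {φ : LTLF PL} (h : CoSafetyLTL φ) :
    ∀ (sh : Bool) (v n : ℕ), v < n →
      (trL φ sh v n).free ⊆ {0, v} ∧ v ∈ (trL φ sh v n).free := by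
  have memlem : ∀ (S : Finset ℕ) (v : ℕ), S ⊆ {0, v} → ∀ w ∈ S, w = 0 ∨ w = v := by
    intro S v hS w hw; have := hS hw; simpa using this
  induction h with
  | pos p =>
      rintro (_|_) v n hvn <;> constructor
      · intro w hw; simp [trL, FOW.free] at hw ⊢; omega
      · simp [trL, FOW.free] <;> omega
      · intro w hw
        simp [trL, FOW.free, nbtw, FOW.impl, Finset.subset_iff] at hw ⊢
        omega
      · simp [trL, FOW.free, nbtw, FOW.impl] <;> omega
  | nneg p =>
      rintro (_|_) v n hvn <;> constructor
      · intro w hw; simp [trL, FOW.free] at hw ⊢; omega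
      · simp [trL, FOW.free] <;> omega
      · intro w hw
        simp [trL, FOW.free, nbtw, FOW.impl, Finset.subset_iff] at hw ⊢
        omega
      · simp [trL, FOW.free, nbtw, FOW.impl] <;> omega
  | disj hφ hψ ihφ ihψ =>
      intro sh v n hvn
      obtain ⟨s1, m1⟩ := ihφ sh v n hvn; obtain ⟨s2, m2⟩ := ihψ sh v n hvn
      exact ⟨by simp only [trL, FOW.free]; exact Finset.union_subset s1 s2,
        by simp only [trL, FOW.free]; exact Finset.mem_union_left _ m1⟩
  | conj hφ hψ ihφ ihψ =>
      intro sh v n hvn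
      obtain ⟨s1, m1⟩ := ihφ sh v n hvn; obtain ⟨s2, m2⟩ := ihψ sh v n hvn
      exact ⟨by simp only [trL, FOW.free]; exact Finset.union_subset s1 s2,
        by simp only [trL, FOW.free]; exact Finset.mem_union_left _ m1⟩
  | next hφ ihφ =>
      rename_i φ'
      rintro (_|_) v n hvn
      · obtain ⟨s1, m1⟩ := ihφ false n (n+2) (by omega)
        constructor
        · intro w hw
          simp only [trL, FOW.free, nbtw, FOW.impl, Finset.mem_erase,
            Finset.mem_union, Finset.mem_insert, Finset.mem_singleton] at hw
          simp only [Finset.mem_insert, Finset.mem_singleton]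
          by_cases hA : w ∈ (trL φ' false n (n+2)).free
          · have := memlem _ _ s1 w hA; omega
          · simp only [hA, or_false] at hw; omega
        · simp [trL, FOW.free, nbtw, FOW.impl] <;> omega
      · exact ihφ false v n hvn
  | wnext hφ ihφ =>
      rename_i φ'
      rintro (_|_) v n hvn
      · obtain ⟨s1, m1⟩ := ihφ false n (n+2) (by omega)
        constructor
        · intro w hw
          simp only [trL, FOW.free, nbtw, FOW.impl, Finset.mem_erase,
            Finset.mem_union, Finset.mem_insert, Finset.mem_singleton] at hw
          simp only [Finset.mem_insert, Finset.mem_singleton]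
          by_cases hA : w ∈ (trL φ' false n (n+2)).free
          · have := memlem _ _ s1 w hA; omega
          · simp only [hA, or_false] at hw; omega
        · simp [trL, FOW.free, nbtw, FOW.impl] <;> omega
      · exact ihφ false v n hvn
  | untl hφ hψ ihφ ihψ =>
      rename_i φ' ψ'
      rintro (_|_) v n hvn
      · obtain ⟨s1, m1⟩ := ihφ true (n+1) (n+2) (by omega)
        obtain ⟨s2, m2⟩ := ihψ true n (n+2) (by omega)
        constructor
        · intro w hw
          simp only [trL, FOW.free, nbtw, FOW.impl, Finset.mem_erase,
            Finset.mem_union, Finset.mem_insert, Finset.mem_singleton] at hw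
          simp only [Finset.mem_insert, Finset.mem_singleton]
          obtain ⟨hwn, hw⟩ := hw
          by_cases hA : w ∈ (trL ψ' true n (n+2)).free
          · have h1 := memlem _ _ s2 w hA; omega
          · by_cases hB : w ∈ (trL φ' true (n+1) (n+2)).free
            · have h1 := memlem _ _ s1 w hB
              simp only [hA, hB, or_false, false_or, and_false, false_and,
                and_true, true_and, or_true, iff_true] at hw
              omega
            · simp only [hA, hB, or_false, false_or, and_false, false_and,
                and_true, true_and] at hw
              omega
        · simp [trL, FOW.free, nbtw, FOW.impl] <;> omega
      · obtain ⟨s1, m1⟩ := ihφ true (n+1) (n+2) (by omega)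
        obtain ⟨s2, m2⟩ := ihψ true n (n+2) (by omega)
        constructor
        · intro w hw
          simp only [trL, FOW.free, nbtw, FOW.impl, FOW.le, Finset.mem_erase,
            Finset.mem_union, Finset.mem_insert, Finset.mem_singleton] at hw
          simp only [Finset.mem_insert, Finset.mem_singleton]
          obtain ⟨hwn, hw⟩ := hw
          by_cases hA : w ∈ (trL ψ' true n (n+2)).free
          · have h1 := memlem _ _ s2 w hA; omega
          · by_cases hB : w ∈ (trL φ' true (n+1) (n+2)).free
            · have h1 := memlem _ _ s1 w hB
              simp only [hA, hB, or_false, false_or, and_false, false_and,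
                and_true, true_and, or_true, iff_true] at hw
              omega
            · simp only [hA, hB, or_false, false_or, and_false, false_and,
                and_true, true_and] at hw
              omega
        · simp [trL, FOW.free, nbtw, FOW.impl, FOW.le] <;> omega

end LinearTranslation

lemma trL_sat (σ : ℕ → Set PL) {φ : LTLF PL} (h : CoSafetyLTL φ) :
    ∀ (v n : ℕ) (val : ℕ → ℕ), v < n → val 0 = 0 →
      (FOSat σ ⊤ (trL φ false v n) val ↔ Sat σ ⊤ φ (val v)) ∧
      (0 < val v → (FOSat σ ⊤ (trL φ true v n) val ↔ Sat σ ⊤ φ (val v - 1))) := by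
  have topf : ∀ m : ℕ, ((m : ℕ) : ℕ∞) < ⊤ := fun m => WithTop.coe_lt_top m
  induction h with
  | pos p =>
    intro v n val hvn h0
    have e1 : ¬((0:ℕ) = n) := by omega
    have e2 : ¬(v = n) := by omega
    have e3 : ¬(n = n+1) := by omega
    have e4 : ¬(v = n+1) := by omega
    constructor
    · simp [trL, FOSat, Sat]
    · intro hv
      simp [trL, FOSat, Sat, nbtw, FOW.impl, Function.update_apply, e1, e2, e3, e4, h0]
      constructor
      · rintro (⟨h1, h2⟩ | ⟨m, hm0, hm1, hm2, hm3⟩)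
        · have hh : val v - 1 = 0 := by have := h1 1 (by omega); omega
          rwa [hh]
        · have hh : val v - 1 = m := by have := hm2 (m+1) (by omega); omega
          rwa [hh]
      · intro hp
        rcases Nat.lt_or_ge (val v) 2 with h2 | h2
        · left
          refine ⟨fun k hk => by omega, ?_⟩
          have hh : val v - 1 = 0 := by omega
          rwa [hh] at hp
        · exact Or.inr ⟨val v - 1, by omega, by omega, fun k hk => by omega, hp⟩
  | nneg p =>
    intro v n val hvn h0
    have e1 : ¬((0:ℕ) = n) := by omega
    have e2 : ¬(v = n) := by omega
    have e3 : ¬(n = n+1) := by omega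
    have e4 : ¬(v = n+1) := by omega
    constructor
    · simp [trL, FOSat, Sat]
    · intro hv
      simp [trL, FOSat, Sat, nbtw, FOW.impl, Function.update_apply, e1, e2, e3, e4, h0]
      constructor
      · rintro (⟨h1, h2⟩ | ⟨m, hm0, hm1, hm2, hm3⟩)
        · have hh : val v - 1 = 0 := by have := h1 1 (by omega); omega
          rwa [hh]
        · have hh : val v - 1 = m := by have := hm2 (m+1) (by omega); omega
          rwa [hh]
      · intro hp
        rcases Nat.lt_or_ge (val v) 2 with h2 | h2
        · left
          refine ⟨fun k hk => by omega, ?_⟩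
          have hh : val v - 1 = 0 := by omega
          rwa [hh] at hp
        · exact Or.inr ⟨val v - 1, by omega, by omega, fun k hk => by omega, hp⟩
  | disj hφ hψ ihφ ihψ =>
    intro v n val hvn h0
    obtain ⟨f1, t1⟩ := ihφ v n val hvn h0
    obtain ⟨f2, t2⟩ := ihψ v n val hvn h0
    constructor
    · simp only [trL, FOSat, Sat]; rw [f1, f2]
    · intro hv; simp only [trL, FOSat, Sat]; rw [t1 hv, t2 hv]
  | conj hφ hψ ihφ ihψ =>
    intro v n val hvn h0
    obtain ⟨f1, t1⟩ := ihφ v n val hvn h0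
    obtain ⟨f2, t2⟩ := ihψ v n val hvn h0
    constructor
    · simp only [trL, FOSat, Sat]; rw [f1, f2]
    · intro hv; simp only [trL, FOSat, Sat]; rw [t1 hv, t2 hv]
  | next hφ ihφ =>
    rename_i φ'
    intro v n val hvn h0
    have e1 : ¬((0:ℕ) = n) := by omega
    have e2 : ¬(v = n) := by omega
    have e3 : ¬(n = n+1) := by omega
    have e4 : ¬(v = n+1) := by omega
    constructor
    · have key : ∀ m : ℕ, FOSat σ ⊤ (trL φ' false n (n+2)) (Function.update val n m)
          ↔ Sat σ ⊤ φ' m := by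
        intro m
        have := (ihφ n (n+2) (Function.update val n m) (by omega)
          (by simp [Function.update_apply, e1, h0])).1
        simpa [Function.update_apply] using this
      simp [trL, FOSat, Sat, nbtw, FOW.impl, key, Function.update_apply, e1, e2, e3, e4, h0]
      constructor
      · rintro ⟨m, h1, h2, h3⟩
        have hh : m = val v + 1 := by have := h2 (val v + 1) (by omega); omega
        rwa [hh] at h3
      · intro h3
        exact ⟨val v + 1, by omega, fun k hk => by omega, h3⟩
    · intro hv
      have := (ihφ v n val hvn h0).1
      simp only [trL, this, Sat]
      have hrw : val v - 1 + 1 = val v := by omega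
      rw [hrw]
      simp
  | wnext hφ ihφ =>
    rename_i φ'
    intro v n val hvn h0
    have e1 : ¬((0:ℕ) = n) := by omega
    have e2 : ¬(v = n) := by omega
    have e3 : ¬(n = n+1) := by omega
    have e4 : ¬(v = n+1) := by omega
    constructor
    · have key : ∀ m : ℕ, FOSat σ ⊤ (trL φ' false n (n+2)) (Function.update val n m)
          ↔ Sat σ ⊤ φ' m := by
        intro m
        have := (ihφ n (n+2) (Function.update val n m) (by omega)
          (by simp [Function.update_apply, e1, h0])).1
        simpa [Function.update_apply] using this
      simp [trL, FOSat, Sat, nbtw, FOW.impl, key, Function.update_apply, e1, e2, e3, e4, h0]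
      constructor
      · rintro ⟨m, h1, h2, h3⟩
        have hh : m = val v + 1 := by have := h2 (val v + 1) (by omega); omega
        rwa [hh] at h3
      · intro h3
        exact ⟨val v + 1, by omega, fun k hk => by omega, h3⟩
    · intro hv
      have := (ihφ v n val hvn h0).1
      simp only [trL, this, Sat]
      have hrw : val v - 1 + 1 = val v := by omega
      rw [hrw]
      simp
  | untl hφ hψ ihφ ihψ =>
    rename_i φ' ψ'
    intro v n val hvn h0
    have e1 : ¬((0:ℕ) = n) := by omega
    have e2 : ¬(v = n) := by omega
    have e5 : ¬((0:ℕ) = n+1) := by omega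
    have e4 : ¬(v = n+1) := by omega
    have e3 : ¬(n = n+1) := by omega
    have keyψ : ∀ m : ℕ, 0 < m →
        (FOSat σ ⊤ (trL ψ' true n (n+2)) (Function.update val n m)
          ↔ Sat σ ⊤ ψ' (m-1)) := by
      intro m hm
      have := (ihψ n (n+2) (Function.update val n m) (by omega)
        (by simp [Function.update_apply, e1, h0])).2
      simpa [Function.update_apply] using this (by simpa using hm)
    have keyφ : ∀ m m' : ℕ, 0 < m' →
        (FOSat σ ⊤ (trL φ' true (n+1) (n+2))
            (Function.update (Function.update val n m) (n+1) m')
          ↔ Sat σ ⊤ φ' (m'-1)) := by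
      intro m m' hm'
      have := (ihφ (n+1) (n+2) (Function.update (Function.update val n m) (n+1) m')
        (by omega) (by simp [Function.update_apply, e1, e5, h0])).2
      simpa [Function.update_apply] using this (by simpa using hm')
    constructor
    · simp only [trL, FOSat, Sat, FOW.impl, FOW.le, Function.update_apply,
        e1, e2, e4, e5, e3, if_false, if_true, eq_self_iff_true, h0]
      constructor
      · rintro ⟨m, -, hvm, hq, hall⟩
        refine ⟨m - 1, by omega, topf _, (keyψ m (by omega)).mp hq, ?_⟩
        intro k hk1 hk2
        have h := hall (k+1) (topf _)
        rcases h with hbad | hgood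
        · exact absurd ⟨by omega, by omega⟩ hbad
        · have := (keyφ m (k+1) (by omega)).mp hgood
          simpa using this
      · rintro ⟨j, hij, -, hq, hks⟩
        refine ⟨j + 1, topf _, by omega, (keyψ (j+1) (by omega)).mpr (by simpa using hq), ?_⟩
        intro m' _
        by_cases hc : val v < m' ∧ m' < j + 1
        · right
          exact (keyφ (j+1) m' (by omega)).mpr (hks (m'-1) (by omega) (by omega))
        · left; exact hc
    · intro hv
      simp only [trL, FOSat, Sat, FOW.impl, FOW.le, Function.update_apply,
        e1, e2, e4, e5, e3, if_false, if_true, eq_self_iff_true, h0]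
      constructor
      · rintro ⟨m, -, hm0, hvm, hq, hall⟩
        refine ⟨m - 1, by omega, topf _, (keyψ m (by omega)).mp hq, ?_⟩
        intro k hk1 hk2
        have h := hall (k+1) (topf _)
        rcases h with hbad | hgood | hgood
        · exact absurd ⟨by omega, by omega⟩ hbad
        · omega
        · have := (keyφ m (k+1) (by omega)).mp hgood
          simpa using this
      · rintro ⟨j, hij, -, hq, hks⟩
        refine ⟨j + 1, topf _, by omega, by omega, (keyψ (j+1) (by omega)).mpr (by simpa using hq), ?_⟩
        intro m' _
        by_cases hc : 0 < m' ∧ m' < j + 1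
        · by_cases hc2 : m' < val v
          · right; left; omega
          · right; right
            exact (keyφ (j+1) m' (by omega)).mpr (hks (m'-1) (by omega) (by omega))
        · left; exact hc

end CoSafetyPaper
open CoSafetyPaper in
/-- There is a linear-size equivalence-preserving translation
from coSafetyLTL to coSafetyFO (over infinite words). -/
theorem cosafetyltl_to_cosafetyFO_linear (PL : Type) [Fintype PL] :
    ∃ C : ℕ, 0 < C ∧ ∀ φ : LTLF PL, CoSafetyLTL φ →
      ∃ ψ : FOW PL, CoSafetyFO ψ ∧ HasOneFree ψ ∧ LinfL φ = LinfFO ψ ∧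
        FOW.size ψ ≤ C * LTLF.size φ := by
  refine ⟨60, by omega, fun φ hφ =>
    ⟨trL φ false 0 1, trL_cosafety hφ false 0 1, ?_, ?_, trL_size hφ false 0 1⟩⟩
  · obtain ⟨hs, hm⟩ := trL_free hφ false 0 1 (by omega)
    refine ⟨0, Finset.Subset.antisymm ?_ (Finset.singleton_subset_iff.mpr hm)⟩
    intro w hw
    have := hs hw
    simpa using this
  · ext σ
    simp only [LinfL, LinfFO, Set.mem_setOf_eq]
    have := (trL_sat σ hφ 0 1 (fun _ => 0) (by omega) rfl).1
    simpa using this.symm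
end

section
/- There is a linear-size translation from coSafetyFO to EBFO: there exists a constant C > 0 such that for every coSafetyFO formula φ(x) with exactly one free variable there exists an EBFO sentence φ' such that L(φ(x)) = L(φ') and |φ'| ≤ C·|φ(x)|. -/
namespace CoSafetyPaper

/-! ### Auxiliary material for the translation -/

section Translation
variable {PL : Type}

/-- All variables occurring in a formula (free or bound). -/
def FOW.vars : FOW PL → Finset ℕ
  | .lt a b => {a, b}
  | .eq a b => {a, b}
  | .pred _ a => {a}
  | .not φ => φ.vars
  | .disj φ ψ => φ.vars ∪ ψ.vars
  | .conj φ ψ => φ.vars ∪ ψ.vars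
  | .ex y φ => insert y φ.vars
  | .all y φ => insert y φ.vars

lemma free_subset_vars : ∀ φ : FOW PL, φ.free ⊆ φ.vars := by
  intro φ
  induction φ with
  | lt a b => simp [FOW.free, FOW.vars]
  | eq a b => simp [FOW.free, FOW.vars]
  | pred p a => simp [FOW.free, FOW.vars]
  | not φ ih => simpa [FOW.free, FOW.vars] using ih
  | disj φ ψ ih1 ih2 => exact Finset.union_subset_union ih1 ih2
  | conj φ ψ ih1 ih2 => exact Finset.union_subset_union ih1 ih2
  | ex y φ ih =>
      exact (Finset.erase_subset _ _).trans (ih.trans (Finset.subset_insert _ _))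
  | all y φ ih =>
      exact (Finset.erase_subset _ _).trans (ih.trans (Finset.subset_insert _ _))

lemma fosat_congr (σ : ℕ → Set PL) (L : ℕ∞) :
    ∀ (φ : FOW PL) (v w : ℕ → ℕ), (∀ u ∈ φ.vars, v u = w u) →
      (FOSat σ L φ v ↔ FOSat σ L φ w) := by
  intro φ
  induction φ with
  | lt a b =>
      intro v w h
      simp only [FOSat, h a (by simp [FOW.vars]), h b (by simp [FOW.vars])]
  | eq a b =>
      intro v w h
      simp only [FOSat, h a (by simp [FOW.vars]), h b (by simp [FOW.vars])]
  | pred p a =>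
      intro v w h
      simp only [FOSat, h a (by simp [FOW.vars])]
  | not φ ih =>
      intro v w h
      simp only [FOSat, ih v w h]
  | disj φ ψ ih1 ih2 =>
      intro v w h
      simp only [FOSat,
        ih1 v w (fun u hu => h u (by simp [FOW.vars, hu])),
        ih2 v w (fun u hu => h u (by simp [FOW.vars, hu]))]
  | conj φ ψ ih1 ih2 =>
      intro v w h
      simp only [FOSat,
        ih1 v w (fun u hu => h u (by simp [FOW.vars, hu])),
        ih2 v w (fun u hu => h u (by simp [FOW.vars, hu]))]
  | ex y φ ih =>
      intro v w h
      simp only [FOSat]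
      refine exists_congr fun n => and_congr_right fun _ => ih _ _ fun u hu => ?_
      rcases eq_or_ne u y with rfl | hne
      · simp
      · simp only [Function.update_of_ne hne]
        exact h u (by simp [FOW.vars, hu])
  | all y φ ih =>
      intro v w h
      simp only [FOSat]
      refine forall_congr' fun n => imp_congr_right fun _ => ih _ _ fun u hu => ?_
      rcases eq_or_ne u y with rfl | hne
      · simp
      · simp only [Function.update_of_ne hne]
        exact h u (by simp [FOW.vars, hu])

lemma fosat_update_not_mem {σ : ℕ → Set PL} {L : ℕ∞} {φ : FOW PL} {x : ℕ}
    (hx : x ∉ φ.vars) (v : ℕ → ℕ) (b : ℕ) :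
    FOSat σ L φ (Function.update v x b) ↔ FOSat σ L φ v := by
  refine fosat_congr σ L φ _ _ fun u hu => ?_
  exact Function.update_of_ne (by rintro rfl; exact hx hu) _ _

/-- The relativization of a coSafetyFO formula to positions `≤ x`. -/
def relv (x : ℕ) : FOW PL → FOW PL
  | .lt a b => .lt a b
  | .eq a b => .eq a b
  | .pred p a => .pred p a
  | .not φ => .not φ
  | .disj φ ψ => .disj (relv x φ) (relv x ψ)
  | .conj φ ψ => .conj (relv x φ) (relv x ψ)
  | .ex y φ => .ex y (.conj (FOW.le y x) (relv x φ))
  | .all y φ => .all y (FOW.impl (FOW.le y x) (relv x φ))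

lemma relv_bounded (x : ℕ) : ∀ {φ : FOW PL}, CoSafetyFO φ → BoundedBy x (relv x φ) := by
  intro φ h
  induction h with
  | lt a b => exact BoundedBy.lt a b
  | eq a b => exact BoundedBy.eq a b
  | ne a b => exact BoundedBy.not (BoundedBy.eq a b)
  | pred p a => exact BoundedBy.pred p a
  | npred p a => exact BoundedBy.not (BoundedBy.pred p a)
  | disj _ _ ih1 ih2 => exact BoundedBy.disj ih1 ih2
  | conj _ _ ih1 ih2 => exact BoundedBy.conj ih1 ih2
  | ex a y _ ih =>
      exact BoundedBy.ex y (BoundedBy.conj (BoundedBy.lt a y) ih)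
  | all a y z _ ih =>
      exact BoundedBy.all y (BoundedBy.disj
        (BoundedBy.not (BoundedBy.conj (BoundedBy.lt a y) (BoundedBy.lt y z))) ih)

lemma relv_free (x : ℕ) :
    ∀ φ : FOW PL, ∀ a ∈ (relv x φ).free, a ∈ φ.free ∨ a = x := by
  intro φ
  induction φ with
  | lt a b => exact fun a ha => Or.inl ha
  | eq a b => exact fun a ha => Or.inl ha
  | pred p a => exact fun a ha => Or.inl ha
  | not φ ih => exact fun a ha => Or.inl ha
  | disj φ ψ ih1 ih2 =>
      intro a ha
      simp only [relv, FOW.free, Finset.mem_union] at ha ⊢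
      rcases ha with h | h
      · rcases ih1 a h with h' | h' <;> tauto
      · rcases ih2 a h with h' | h' <;> tauto
  | conj φ ψ ih1 ih2 =>
      intro a ha
      simp only [relv, FOW.free, Finset.mem_union] at ha ⊢
      rcases ha with h | h
      · rcases ih1 a h with h' | h' <;> tauto
      · rcases ih2 a h with h' | h' <;> tauto
  | ex y φ ih =>
      intro a ha
      simp only [relv, FOW.free, FOW.le, Finset.mem_erase, Finset.mem_union,
        Finset.mem_insert, Finset.mem_singleton] at ha ⊢
      obtain ⟨hay, h⟩ := ha
      rcases h with h | h
      · tauto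
      · rcases ih a h with h' | h' <;> tauto
  | all y φ ih =>
      intro a ha
      simp only [relv, FOW.free, FOW.le, FOW.impl, Finset.mem_erase, Finset.mem_union,
        Finset.mem_insert, Finset.mem_singleton] at ha ⊢
      obtain ⟨hay, h⟩ := ha
      rcases h with h | h
      · tauto
      · rcases ih a h with h' | h' <;> tauto

lemma relv_size (x : ℕ) : ∀ φ : FOW PL, (relv x φ).size ≤ 6 * φ.size := by
  intro φ
  induction φ with
  | lt a b => simp [relv, FOW.size]
  | eq a b => simp [relv, FOW.size]
  | pred p a => simp [relv, FOW.size]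
  | not φ ih => simp [relv, FOW.size]
  | disj φ ψ ih1 ih2 => simp only [relv, FOW.size]; omega
  | conj φ ψ ih1 ih2 => simp only [relv, FOW.size]; omega
  | ex y φ ih => simp only [relv, FOW.size, FOW.le]; omega
  | all y φ ih => simp only [relv, FOW.size, FOW.le, FOW.impl]; omega

lemma size_pos : ∀ φ : FOW PL, 1 ≤ φ.size := by
  intro φ; cases φ <;> · simp only [FOW.size]; omega

lemma fosat_le {σ : ℕ → Set PL} {L : ℕ∞} (y x : ℕ) (v : ℕ → ℕ) :
    FOSat σ L (FOW.le y x : FOW PL) v ↔ v y ≤ v x := by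
  simp only [FOW.le, FOSat]; omega

lemma fosat_impl {σ : ℕ → Set PL} {L : ℕ∞} (φ ψ : FOW PL) (v : ℕ → ℕ) :
    FOSat σ L (FOW.impl φ ψ) v ↔ (FOSat σ L φ v → FOSat σ L ψ v) := by
  simp only [FOW.impl, FOSat]; tauto

lemma coe_lt_top' (n : ℕ) : (n : ℕ∞) < ⊤ := by
  exact_mod_cast WithTop.coe_lt_top n

lemma relv_sound (σ : ℕ → Set PL) (x : ℕ) :
    ∀ {φ : FOW PL}, CoSafetyFO φ → x ∉ φ.vars →
      ∀ (v : ℕ → ℕ) (b : ℕ), (∀ u ∈ φ.vars, v u ≤ b) →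
        FOSat σ ⊤ (relv x φ) (Function.update v x b) → FOSat σ ⊤ φ v := by
  intro φ h
  induction h with
  | lt a c =>
      intro hx v b hv hs
      rwa [show relv x (.lt a c) = (.lt a c : FOW PL) from rfl,
        fosat_update_not_mem hx] at hs
  | eq a c =>
      intro hx v b hv hs
      rwa [show relv x (.eq a c) = (.eq a c : FOW PL) from rfl,
        fosat_update_not_mem hx] at hs
  | ne a c =>
      intro hx v b hv hs
      rwa [show relv x (.not (.eq a c)) = (.not (.eq a c) : FOW PL) from rfl,
        fosat_update_not_mem hx] at hs
  | pred p a =>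
      intro hx v b hv hs
      rwa [show relv x (.pred p a) = (.pred p a : FOW PL) from rfl,
        fosat_update_not_mem hx] at hs
  | npred p a =>
      intro hx v b hv hs
      rwa [show relv x (.not (.pred p a)) = (.not (.pred p a) : FOW PL) from rfl,
        fosat_update_not_mem hx] at hs
  | disj h1 h2 ih1 ih2 =>
      intro hx v b hv hs
      simp only [FOW.vars, Finset.mem_union, not_or] at hx
      simp only [relv, FOSat] at hs
      rcases hs with hs | hs
      · exact Or.inl (ih1 hx.1 v b (fun u hu => hv u (by simp [FOW.vars, hu])) hs)
      · exact Or.inr (ih2 hx.2 v b (fun u hu => hv u (by simp [FOW.vars, hu])) hs)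
  | conj h1 h2 ih1 ih2 =>
      intro hx v b hv hs
      simp only [FOW.vars, Finset.mem_union, not_or] at hx
      simp only [relv, FOSat] at hs
      exact ⟨ih1 hx.1 v b (fun u hu => hv u (by simp [FOW.vars, hu])) hs.1,
        ih2 hx.2 v b (fun u hu => hv u (by simp [FOW.vars, hu])) hs.2⟩
  | @ex a y χ hφ ih =>
      intro hx v b hv hs
      have hxy : x ≠ y := fun hh => hx (by simp [FOW.vars, hh])
      have hxa : x ≠ a := fun hh => hx (by simp [FOW.vars, hh])
      have hxχ : x ∉ χ.vars := fun hh => hx (by simp [FOW.vars, hh])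
      simp only [relv, FOSat] at hs
      obtain ⟨n, -, hle, hg, hr⟩ := hs
      have hw : Function.update (Function.update v x b) y n
          = Function.update (Function.update v y n) x b :=
        Function.update_comm hxy _ _ _
      simp only [hw, fosat_le, Function.update_self, Function.update_of_ne (Ne.symm hxy)] at hle
      have hnb : n ≤ b := by omega
      simp only [hw, Function.update_of_ne (Ne.symm hxy),
        Function.update_of_ne (Ne.symm hxa)] at hg
      rw [hw] at hr
      have hχ := ih hxχ (Function.update v y n) b
        (fun u hu => by
          rcases eq_or_ne u y with rfl | hne
          · simpa using hnb
          · rw [Function.update_of_ne hne]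
            exact hv u (by simp [FOW.vars, hu])) hr
      simp only [FOSat]
      exact ⟨n, coe_lt_top' n, by
        simpa only [Function.update_self] using hg, hχ⟩
  | @all a y z χ hφ ih =>
      intro hx v b hv hs
      have hxy : x ≠ y := fun hh => hx (by simp [FOW.vars, hh])
      have hxa : x ≠ a := fun hh => hx (by simp [FOW.vars, FOW.impl, hh])
      have hxz : x ≠ z := fun hh => hx (by simp [FOW.vars, FOW.impl, hh])
      have hxχ : x ∉ χ.vars := fun hh => hx (by simp [FOW.vars, FOW.impl, hh])
      simp only [relv, FOW.impl, FOW.le, FOSat] at hs ⊢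
      intro n _
      by_cases hzy : z = y
      · subst hzy
        left
        rintro ⟨-, h2⟩
        simp only [Function.update_self] at h2
        omega
      by_cases hg : Function.update v y n a < Function.update v y n y ∧
          Function.update v y n y < Function.update v y n z
      · right
        have hw : Function.update (Function.update v x b) y n
            = Function.update (Function.update v y n) x b :=
          Function.update_comm hxy _ _ _
        have hnb : n ≤ b := by
          have h2 := hg.2
          rw [Function.update_self, Function.update_of_ne hzy] at h2
          have := hv z (by simp [FOW.vars, FOW.impl])
          omega
        have hs' := hs n (coe_lt_top' n)
        simp only [hw, Function.update_self, Function.update_of_ne (Ne.symm hxy),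
          Function.update_of_ne (Ne.symm hxa), Function.update_of_ne (Ne.symm hxz),
          Function.update_of_ne hzy] at hs'
        rcases hs' with h1 | h2 | h3
        · exact absurd (by omega) h1
        · refine absurd ?_ h2
          have hga := hg.1
          have hgz := hg.2
          rw [Function.update_self] at hga hgz
          rw [Function.update_of_ne hzy] at hgz
          exact ⟨hga, hgz⟩
        · exact ih hxχ (Function.update v y n) b
            (fun u hu => by
              rcases eq_or_ne u y with rfl | hne
              · simpa using hnb
              · rw [Function.update_of_ne hne]
                exact hv u (by simp [FOW.vars, FOW.impl, hu])) h3
      · left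
        exact hg

lemma relv_complete (σ : ℕ → Set PL) (x : ℕ) :
    ∀ {φ : FOW PL}, CoSafetyFO φ → x ∉ φ.vars →
      ∀ v : ℕ → ℕ, FOSat σ ⊤ φ v →
        ∃ b0 : ℕ, ∀ b, b0 ≤ b → FOSat σ ⊤ (relv x φ) (Function.update v x b) := by
  intro φ h
  induction h with
  | lt a c =>
      intro hx v hs
      exact ⟨0, fun b _ => by
        rwa [show relv x (.lt a c) = (.lt a c : FOW PL) from rfl,
          fosat_update_not_mem hx]⟩
  | eq a c =>
      intro hx v hs
      exact ⟨0, fun b _ => by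
        rwa [show relv x (.eq a c) = (.eq a c : FOW PL) from rfl,
          fosat_update_not_mem hx]⟩
  | ne a c =>
      intro hx v hs
      exact ⟨0, fun b _ => by
        rwa [show relv x (.not (.eq a c)) = (.not (.eq a c) : FOW PL) from rfl,
          fosat_update_not_mem hx]⟩
  | pred p a =>
      intro hx v hs
      exact ⟨0, fun b _ => by
        rwa [show relv x (.pred p a) = (.pred p a : FOW PL) from rfl,
          fosat_update_not_mem hx]⟩
  | npred p a =>
      intro hx v hs
      exact ⟨0, fun b _ => by
        rwa [show relv x (.not (.pred p a)) = (.not (.pred p a) : FOW PL) from rfl,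
          fosat_update_not_mem hx]⟩
  | disj h1 h2 ih1 ih2 =>
      intro hx v hs
      simp only [FOW.vars, Finset.mem_union, not_or] at hx
      simp only [FOSat] at hs
      rcases hs with hs | hs
      · obtain ⟨b0, hb0⟩ := ih1 hx.1 v hs
        exact ⟨b0, fun b hb => Or.inl (hb0 b hb)⟩
      · obtain ⟨b0, hb0⟩ := ih2 hx.2 v hs
        exact ⟨b0, fun b hb => Or.inr (hb0 b hb)⟩
  | conj h1 h2 ih1 ih2 =>
      intro hx v hs
      simp only [FOW.vars, Finset.mem_union, not_or] at hx
      simp only [FOSat] at hs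
      obtain ⟨b1, hb1⟩ := ih1 hx.1 v hs.1
      obtain ⟨b2, hb2⟩ := ih2 hx.2 v hs.2
      exact ⟨max b1 b2, fun b hb => ⟨hb1 b (by omega), hb2 b (by omega)⟩⟩
  | @ex a y χ hφ ih =>
      intro hx v hs
      have hxy : x ≠ y := fun hh => hx (by simp [FOW.vars, hh])
      have hxa : x ≠ a := fun hh => hx (by simp [FOW.vars, hh])
      have hxχ : x ∉ χ.vars := fun hh => hx (by simp [FOW.vars, hh])
      simp only [FOSat] at hs
      obtain ⟨n, -, hg, hχ⟩ := hs
      obtain ⟨b0, hb0⟩ := ih hxχ (Function.update v y n) hχ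
      refine ⟨max b0 n, fun b hb => ?_⟩
      have hw : Function.update (Function.update v x b) y n
          = Function.update (Function.update v y n) x b :=
        Function.update_comm hxy _ _ _
      simp only [relv, FOSat]
      refine ⟨n, coe_lt_top' n, ?_, ?_, ?_⟩
      · simp only [hw, fosat_le, Function.update_self, Function.update_of_ne (Ne.symm hxy)]
        omega
      · simp only [hw, Function.update_self, Function.update_of_ne (Ne.symm hxy),
          Function.update_of_ne (Ne.symm hxa)]
        simpa only [Function.update_self] using hg
      · rw [hw]
        exact hb0 b (by omega)
  | @all a y z χ hφ ih =>
      intro hx v hs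
      have hxy : x ≠ y := fun hh => hx (by simp [FOW.vars, hh])
      have hxa : x ≠ a := fun hh => hx (by simp [FOW.vars, FOW.impl, hh])
      have hxz : x ≠ z := fun hh => hx (by simp [FOW.vars, FOW.impl, hh])
      have hxχ : x ∉ χ.vars := fun hh => hx (by simp [FOW.vars, FOW.impl, hh])
      simp only [FOW.impl, FOSat] at hs
      have key : ∀ n : ℕ, ∃ b0 : ℕ, ∀ b, b0 ≤ b →
          ((Function.update v y n a < Function.update v y n y ∧
            Function.update v y n y < Function.update v y n z) →
            FOSat σ ⊤ (relv x χ) (Function.update (Function.update v y n) x b)) := by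
        intro n
        by_cases hg : Function.update v y n a < Function.update v y n y ∧
            Function.update v y n y < Function.update v y n z
        · have hχ : FOSat σ ⊤ χ (Function.update v y n) := by
            rcases hs n (coe_lt_top' n) with h | h
            · exact absurd hg h
            · exact h
          obtain ⟨b0, hb0⟩ := ih hxχ (Function.update v y n) hχ
          exact ⟨b0, fun b hb _ => hb0 b hb⟩
        · exact ⟨0, fun b _ hg' => absurd hg' hg⟩
      choose f hf using key
      refine ⟨(Finset.range (v z)).sup f, fun b hb => ?_⟩
      simp only [relv, FOW.impl, FOW.le, FOSat]
      intro n _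
      by_cases hzy : z = y
      · subst hzy
        right
        left
        rintro ⟨-, h2⟩
        simp only [Function.update_self] at h2
        omega
      have hw : Function.update (Function.update v x b) y n
          = Function.update (Function.update v y n) x b :=
        Function.update_comm hxy _ _ _
      simp only [hw, Function.update_self, Function.update_of_ne (Ne.symm hxy),
        Function.update_of_ne (Ne.symm hxa), Function.update_of_ne (Ne.symm hxz),
        Function.update_of_ne hzy]
      by_cases hg : Function.update v y n a < n ∧ n < v z
      · right
        right
        have hfn : f n ≤ b := by
          have : f n ≤ (Finset.range (v z)).sup f :=
            Finset.le_sup (Finset.mem_range.mpr hg.2)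
          omega
        refine hf n b hfn ?_
        simpa only [Function.update_self, Function.update_of_ne hzy] using hg
      · right
        left
        exact hg

end Translation
end CoSafetyPaper
open CoSafetyPaper in
/-- There is a linear-size translation from coSafetyFO formulas
with exactly one free variable to EBFO sentences, preserving the ω-language. -/
theorem cosafetyFO_to_EBFO_linear (PL : Type) [Fintype PL] :
    ∃ C : ℕ, 0 < C ∧ ∀ φ : FOW PL, CoSafetyFO φ → HasOneFree φ →
      ∃ ψ : FOW PL, IsEBFO ψ ∧ LinfFO φ = LinfSent ψ ∧
        FOW.size ψ ≤ C * FOW.size φ := by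
  refine ⟨37, by norm_num, fun φ h hfree => ?_⟩
  obtain ⟨z, hz⟩ := hfree
  set N := φ.vars.sup id with hN
  set x := N + 1 with hx
  set yg := N + 2 with hyg
  have hxvars : x ∉ φ.vars := by
    intro hh
    have := Finset.le_sup (f := id) hh
    simp only [id] at this
    omega
  have hzvars : z ∈ φ.vars := free_subset_vars φ (by rw [hz]; exact Finset.mem_singleton_self z)
  have hzN : z ≤ N := by simpa using Finset.le_sup (f := id) hzvars
  have hxz : x ≠ z := by omega
  have hygx : yg ≠ x := by omega
  have hygz : yg ≠ z := by omega
  set g : FOW PL := .all yg (FOW.impl (FOW.le yg x) (FOW.le z yg)) with hg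
  set φ' : FOW PL := .ex z (.conj (FOW.le z x) (.conj g (relv x φ))) with hφ'
  refine ⟨.ex x φ', ⟨x, φ', rfl, ?_, ?_⟩, ?_, ?_⟩
  · -- BoundedBy
    refine BoundedBy.ex z (BoundedBy.conj ?_ (relv_bounded x h))
    exact BoundedBy.all yg (BoundedBy.disj (BoundedBy.lt z yg) (BoundedBy.eq z yg))
  · -- free variables of φ' = {x}
    have hrel : ∀ a ∈ (relv x φ).free, a = z ∨ a = x := by
      intro a ha
      rcases relv_free x φ a ha with h' | h'
      · left; rw [hz] at h'; simpa using h'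
      · right; simpa using h'
    ext a
    simp only [hφ', hg, FOW.free, FOW.le, FOW.impl, Finset.mem_erase, Finset.mem_union,
      Finset.mem_insert, Finset.mem_singleton]
    constructor
    · rintro ⟨haz, h'⟩
      rcases h' with (h' | h') | (h' | h')
      · tauto
      · tauto
      · obtain ⟨hay, h'⟩ := h'
        tauto
      · rcases hrel a h' with rfl | rfl
        · exact absurd rfl haz
        · rfl
    · rintro rfl
      exact ⟨hxz, by tauto⟩
  · -- language equality
    have hupd : ∀ b : ℕ, Function.update (Function.update (fun _ => 0 : ℕ → ℕ) x b) z 0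
        = Function.update (fun _ => 0 : ℕ → ℕ) x b := by
      intro b
      funext u
      rcases eq_or_ne u z with rfl | hne
      · rw [Function.update_self, Function.update_of_ne (Ne.symm hxz)]
      · rw [Function.update_of_ne hne]
    ext σ
    simp only [LinfFO, LinfSent, Set.mem_setOf_eq]
    constructor
    · intro hsat
      obtain ⟨b0, hb0⟩ := relv_complete σ x h hxvars (fun _ => 0) hsat
      have hrel := hb0 b0 le_rfl
      simp only [hφ', hg, FOSat, FOW.le, FOW.impl]
      refine ⟨b0, coe_lt_top' b0, 0, coe_lt_top' 0, ?_, ?_, ?_⟩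
      · -- le z x
        simp only [Function.update_self, Function.update_of_ne (Ne.symm hxz)]
        omega
      · -- gadget
        intro nn _
        right
        simp only [Function.update_of_ne (Ne.symm hygz), Function.update_self]
        omega
      · rw [hupd b0]
        exact hrel
    · intro hsat
      simp only [hφ', hg, FOSat, FOW.le, FOW.impl] at hsat
      obtain ⟨b, -, m, -, hle, hgad, hr⟩ := hsat
      have hm : m = 0 := by
        have := hgad 0 (coe_lt_top' 0)
        simp only [Function.update_self,
          Function.update_of_ne (Ne.symm hygz),
          Function.update_of_ne (Ne.symm hygx),
          Function.update_of_ne hxz,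
          Function.update_self] at this
        rcases this with h1 | h2
        · exact absurd (by omega) h1
        · omega
      subst hm
      rw [hupd b] at hr
      exact relv_sound σ x h hxvars (fun _ => 0) b (fun u _ => Nat.zero_le b) hr
  · -- size bound
    have h1 := relv_size x φ
    have h2 := size_pos φ
    simp only [hφ', hg, FOW.size, FOW.le, FOW.impl]
    omega
end
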